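/- arXiv:math/0506358 — 7 statements merged into one kernel-verified Lean document; each statement's English description precedes it below -/
import Mathlib

section
/- For every set partition T = {t_1,…,t_k} of {1,…,n}, listing the blocks so that their minima increase (min(t_1) < min(t_2) < ⋯ < min(t_k)), there exists a permutation τ of {1,…,n} whose Patience Sorting pile configuration R(τ) is exactly the sequence of piles (t_1,…,t_k); moreover one may take τ = RPW(T), the concatenation of t_1,…,t_k with each block written in decreasing order. -/
/-- One step of Patience Sorting: place card `c` on the leftmost pile whose top
(head) is larger than `c`, or start a new pile on the right.  Piles are stored
top-first, so each pile is an increasing list whose head is the top (smallest) card. -/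
def PSinsert (c : ℕ) : List (List ℕ) → List (List ℕ)
  | [] => [[c]]
  | [] :: ps => [] :: PSinsert c ps
  | (x :: p) :: ps =>
      if c < x then (c :: x :: p) :: ps else (x :: p) :: PSinsert c ps

/-- The pile configuration `R(w)` produced by Patience Sorting applied to the word `w`. -/
def PSpiles (w : List ℕ) : List (List ℕ) :=
  w.foldl (fun ps c => PSinsert c ps) []

/-- The one-line word (with values `1,…,n`) of a permutation of `Fin n`. -/
def permWord {n : ℕ} (σ : Equiv.Perm (Fin n)) : List ℕ :=
  List.ofFn fun i => (σ i : ℕ) + 1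

lemma insert_new (c : ℕ) (ps : List (List ℕ))
    (h : ∀ p ∈ ps, ∃ x l, p = x :: l ∧ x ≤ c) :
    PSinsert c ps = ps ++ [[c]] := by
  induction ps with
  | nil => rfl
  | cons p ps ih =>
    obtain ⟨x, l, rfl, hx⟩ := h _ (List.mem_cons_self)
    simp [PSinsert, Nat.not_lt.mpr hx, ih fun q hq => h q (List.mem_cons_of_mem _ hq)]

lemma insert_last (c x : ℕ) (l : List ℕ) (ps : List (List ℕ))
    (h : ∀ p ∈ ps, ∃ y m, p = y :: m ∧ y ≤ c) (hc : c < x) :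
    PSinsert c (ps ++ [x :: l]) = ps ++ [c :: x :: l] := by
  induction ps with
  | nil => simp [PSinsert, hc]
  | cons p ps ih =>
    obtain ⟨y, m, rfl, hy⟩ := h _ (List.mem_cons_self)
    simp [PSinsert, Nat.not_lt.mpr hy, ih fun q hq => h q (List.mem_cons_of_mem _ hq)]

lemma foldl_aux : ∀ (d : List ℕ), d.Pairwise (· > ·) →
    ∀ (x : ℕ) (l : List ℕ) (ps : List (List ℕ)),
    (∀ c ∈ d, c < x) →
    (∀ c ∈ d, ∀ p ∈ ps, ∃ y m, p = y :: m ∧ y ≤ c) →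
    List.foldl (fun ps c => PSinsert c ps) (ps ++ [x :: l]) d
      = ps ++ [d.reverse ++ x :: l]
  | [], _, x, l, ps, _, _ => by simp
  | c :: d, hd, x, l, ps, hlt, htop => by
    rw [List.foldl_cons,
      insert_last c x l ps (fun p hp => htop c (List.mem_cons_self) p hp)
        (hlt c (List.mem_cons_self)),
      foldl_aux d hd.of_cons c (x :: l) ps
        (fun c' hc' => (List.pairwise_cons.1 hd).1 c' hc')
        (fun c' hc' p hp => htop c' (List.mem_cons_of_mem _ hc') p hp)]
    simp

lemma foldl_block (d : List ℕ) (hd : d.Pairwise (· > ·)) (hne : d ≠ [])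
    (ps : List (List ℕ))
    (htop : ∀ c ∈ d, ∀ p ∈ ps, ∃ y m, p = y :: m ∧ y ≤ c) :
    List.foldl (fun ps c => PSinsert c ps) ps d = ps ++ [d.reverse] := by
  cases d with
  | nil => exact absurd rfl hne
  | cons a d =>
    rw [List.foldl_cons,
      insert_new a ps (htop a (List.mem_cons_self)),
      foldl_aux d hd.of_cons a [] ps
        (fun c hc => (List.pairwise_cons.1 hd).1 c hc)
        (fun c hc p hp => htop c (List.mem_cons_of_mem _ hc) p hp)]
    simp

lemma main_lemma : ∀ (T : List (Finset ℕ)) (ps : List (List ℕ)),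
    (∀ t ∈ T, t.Nonempty) →
    List.Pairwise (fun s t : Finset ℕ => s.min < t.min) T →
    (∀ t ∈ T, ∀ c ∈ t, ∀ p ∈ ps, ∃ y m, p = y :: m ∧ y ≤ c) →
    List.foldl (fun ps c => PSinsert c ps) ps
      ((T.map fun t => (t.sort (· ≤ ·)).reverse).flatten)
      = ps ++ T.map (fun t => t.sort (· ≤ ·))
  | [], ps, _, _, _ => by simp
  | t :: T, ps, hne, hpw, htop => by
    have hsort : (t.sort (· ≤ ·)).Pairwise (· < ·) := (Finset.sortedLT_sort t).pairwise
    have hrev : ((t.sort (· ≤ ·)).reverse).Pairwise (· > ·) :=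
      List.pairwise_reverse.mpr hsort
    have hnil : (t.sort (· ≤ ·)) ≠ [] := by
      intro hcontra
      have h := hne t (List.mem_cons_self)
      rw [← Finset.sort_toFinset t (· ≤ ·), hcontra] at h
      simp at h
    have hrevnil : ((t.sort (· ≤ ·)).reverse) ≠ [] := by
      simpa using hnil
    rw [List.map_cons, List.flatten_cons, List.foldl_append,
      foldl_block _ hrev hrevnil ps (fun c hc p hp =>
        htop t (List.mem_cons_self) c
          ((Finset.mem_sort _).1 (List.mem_reverse.1 hc)) p hp),
      List.reverse_reverse]
    -- new top pile condition
    obtain ⟨y, m, hym⟩ : ∃ y m, t.sort (· ≤ ·) = y :: m := by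
      cases h : t.sort (· ≤ ·) with
      | nil => exact absurd h hnil
      | cons a l => exact ⟨a, l, rfl⟩
    have hy_le : ∀ z ∈ t, y ≤ z := by
      intro z hz
      have hs := Finset.pairwise_sort t (· ≤ ·)
      rw [hym] at hs
      have hz' : z ∈ y :: m := by rw [← hym]; exact (Finset.mem_sort _).2 hz
      rcases List.mem_cons.1 hz' with rfl | hz'
      · exact le_refl _
      · exact (List.pairwise_cons.1 hs).1 z hz'
    have hymem : y ∈ t := (Finset.mem_sort _).1 (by rw [hym]; exact List.mem_cons_self)
    have htop' : ∀ t' ∈ T, ∀ c ∈ t', ∀ p ∈ ps ++ [t.sort (· ≤ ·)],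
        ∃ y' m', p = y' :: m' ∧ y' ≤ c := by
      intro t' ht' c hc p hp
      rcases List.mem_append.1 hp with hp | hp
      · exact htop t' (List.mem_cons_of_mem _ ht') c hc p hp
      · have hp' : p = y :: m := by
          simpa [hym] using List.mem_singleton.1 hp
        refine ⟨y, m, hp', ?_⟩
        have h1 : t.min < t'.min := (List.pairwise_cons.1 hpw).1 t' ht'
        have h2 : t'.min ≤ (c : WithTop ℕ) := Finset.min_le hc
        have h4 : (y : WithTop ℕ) ≤ t.min := by
          rcases Finset.min_of_nonempty (hne t (List.mem_cons_self)) with ⟨a, ha⟩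
          rw [ha]
          exact WithTop.coe_le_coe.mpr (hy_le a (Finset.mem_of_min ha))
        have h5 : (y : WithTop ℕ) < (c : WithTop ℕ) :=
          lt_of_le_of_lt h4 (lt_of_lt_of_le h1 h2)
        exact le_of_lt (WithTop.coe_lt_coe.mp h5)
    rw [main_lemma T (ps ++ [t.sort (· ≤ ·)])
      (fun t' ht' => hne t' (List.mem_cons_of_mem _ ht'))
      (List.pairwise_cons.1 hpw).2 htop']
    simp


/-- For every set partition `T = (t_1,…,t_k)` of `{1,…,n}`, listed so that
the minima of the blocks increase, the permutation `τ = RPW(T)` (the concatenation of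
the blocks, each written in decreasing order) has Patience Sorting pile configuration
exactly the sequence of piles `(t_1,…,t_k)`; in particular such a permutation exists. -/
theorem stmt1 (n : ℕ) (T : List (Finset ℕ))
    (hne : ∀ t ∈ T, t.Nonempty)
    (hdisj : List.Pairwise Disjoint T)
    (hcover : T.foldr (· ∪ ·) ∅ = Finset.Icc 1 n)
    (hmin : ∀ i j : ℕ, i < j → j < T.length → (T.getD i ∅).min < (T.getD j ∅).min) :
    (PSpiles ((T.map fun t => (t.sort (· ≤ ·)).reverse).flatten)).map List.toFinset = T := by
  have hpw : List.Pairwise (fun s t : Finset ℕ => s.min < t.min) T := by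
    rw [List.pairwise_iff_getElem]
    intro i j hi hj hij
    have := hmin i j hij hj
    rwa [List.getD_eq_getElem _ _ (lt_trans hij hj), List.getD_eq_getElem _ _ hj] at this
  have h := main_lemma T [] hne hpw (by simp)
  rw [PSpiles, h]
  simp only [List.nil_append, List.map_map]
  rw [show (List.toFinset ∘ fun t : Finset ℕ => t.sort (· ≤ ·)) = id from
    funext fun t => Finset.sort_toFinset t _]
  exact List.map_id T
end

section
/- For every permutation σ of {1,…,n}, applying Patience Sorting to the reverse patience word of the pile configuration of σ returns the same pile configuration: R(RPW(R(σ))) = R(σ). -/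
/-- The reverse patience word of a pile configuration: concatenate the piles
left to right, each pile written in decreasing order (bottom to top).
Since piles are stored top-first (increasing), each pile is reversed. -/
def RPW (P : List (List ℕ)) : List ℕ := (P.map List.reverse).flatten

def PileInv (P : List (List ℕ)) : Prop :=
  (∀ p ∈ P, p ≠ []) ∧ (∀ p ∈ P, p.Pairwise (· < ·)) ∧
  P.Pairwise (fun p q => ∀ a ∈ p.head?, ∀ x ∈ q, a ≤ x)

lemma mem_PSinsert (c : ℕ) : ∀ ps q y, q ∈ PSinsert c ps → y ∈ q →
    y = c ∨ ∃ q' ∈ ps, y ∈ q' := by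
  intro ps
  induction ps with
  | nil => intro q y hq hy; simp [PSinsert] at hq; subst hq; simp at hy; left; exact hy
  | cons p ps ih =>
    intro q y hq hy
    match p with
    | [] =>
      simp only [PSinsert, List.mem_cons] at hq
      rcases hq with h | h
      · subst h; simp at hy
      · rcases ih q y h hy with h1 | ⟨q', hq', hy'⟩
        · left; exact h1
        · right; exact ⟨q', List.mem_cons_of_mem _ hq', hy'⟩
    | x :: p' =>
      simp only [PSinsert] at hq
      split at hq
      · rcases List.mem_cons.1 hq with h | h
        · subst h
          rcases List.mem_cons.1 hy with h1 | h1
          · left; exact h1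
          · right; exact ⟨x :: p', List.mem_cons_self, h1⟩
        · right; exact ⟨q, List.mem_cons_of_mem _ h, hy⟩
      · rcases List.mem_cons.1 hq with h | h
        · right; exact ⟨x :: p', List.mem_cons_self, h ▸ hy⟩
        · rcases ih q y h hy with h1 | ⟨q', hq', hy'⟩
          · left; exact h1
          · right; exact ⟨q', List.mem_cons_of_mem _ hq', hy'⟩

lemma inv_insert (c : ℕ) : ∀ P, PileInv P → PileInv (PSinsert c P) := by
  intro P
  induction P with
  | nil =>
    intro _
    refine ⟨?_, ?_, ?_⟩ <;> simp [PSinsert]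
  | cons p ps ih =>
    rintro ⟨hne, hsort, hpw⟩
    have hpne := hne p (List.mem_cons_self)
    match p, hpne with
    | x :: p', _ =>
      have hpsorted := hsort _ (List.mem_cons_self)
      rw [List.pairwise_cons] at hpw
      obtain ⟨hhead, hpw'⟩ := hpw
      have hinvps : PileInv ps :=
        ⟨fun q hq => hne q (List.mem_cons_of_mem _ hq),
         fun q hq => hsort q (List.mem_cons_of_mem _ hq), hpw'⟩
      simp only [PSinsert]
      split
      · next hc =>
        constructor
        · intro q hq
          rcases List.mem_cons.1 hq with h | h
          · subst h; simp
          · exact hne q (List.mem_cons_of_mem _ h)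
        constructor
        · intro q hq
          rcases List.mem_cons.1 hq with h | h
          · subst h
            rw [List.pairwise_cons]
            refine ⟨?_, hpsorted⟩
            intro b hb
            rcases List.mem_cons.1 hb with h1 | h1
            · subst h1; exact hc
            · exact lt_trans hc ((List.pairwise_cons.1 hpsorted).1 b h1)
          · exact hsort q (List.mem_cons_of_mem _ h)
        · rw [List.pairwise_cons]
          refine ⟨?_, hpw'⟩
          intro q hq a ha y hy
          simp at ha; subst ha
          have := hhead q hq x (by simp) y hy
          omega
      · next hc =>
        have hxc : x ≤ c := le_of_not_gt hc
        obtain ⟨h1, h2, h3⟩ := ih hinvps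
        constructor
        · intro q hq
          rcases List.mem_cons.1 hq with h | h
          · subst h; simp
          · exact h1 q h
        constructor
        · intro q hq
          rcases List.mem_cons.1 hq with h | h
          · subst h; exact hpsorted
          · exact h2 q h
        · rw [List.pairwise_cons]
          refine ⟨?_, h3⟩
          intro q hq a ha y hy
          simp at ha; subst ha
          rcases mem_PSinsert c ps q y hq hy with h | ⟨q', hq', hy'⟩
          · subst h; exact hxc
          · exact hhead q' hq' x (by simp) y hy'

lemma skip_lemma (c : ℕ) : ∀ (P Q : List (List ℕ)),
    (∀ p ∈ P, ∃ a, p.head? = some a ∧ a ≤ c) →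
    PSinsert c (P ++ Q) = P ++ PSinsert c Q := by
  intro P
  induction P with
  | nil => intro Q _; rfl
  | cons p P ih =>
    intro Q h
    obtain ⟨a, ha, hac⟩ := h p (List.mem_cons_self)
    match p with
    | [] => simp at ha
    | x :: p' =>
      simp at ha; subst ha
      simp only [List.cons_append, PSinsert, if_neg (not_lt.2 hac), List.append_eq]
      rw [ih Q (fun q hq => h q (List.mem_cons_of_mem _ hq))]

lemma rebuild : ∀ (r : List ℕ) (P : List (List ℕ)),
    r.Pairwise (· < ·) → r ≠ [] →
    (∀ p ∈ P, ∃ a, p.head? = some a ∧ ∀ x ∈ r, a ≤ x) →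
    List.foldl (fun ps c => PSinsert c ps) P r.reverse = P ++ [r] := by
  intro r
  induction r with
  | nil => intro P _ h _; exact absurd rfl h
  | cons a t ih =>
    intro P hsort _ hP
    match t with
    | [] =>
      simp only [List.reverse_cons, List.reverse_nil, List.nil_append, List.foldl_cons,
        List.foldl_nil]
      have := skip_lemma a P []
      simp only [List.append_nil] at this
      rw [this (fun p hp => by
        obtain ⟨b, hb, hba⟩ := hP p hp
        exact ⟨b, hb, hba a (by simp)⟩)]
      rfl
    | b :: t' =>
      have htsort : (b :: t').Pairwise (· < ·) := (List.pairwise_cons.1 hsort).2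
      have hab : a < b := (List.pairwise_cons.1 hsort).1 b (by simp)
      have step1 : List.foldl (fun ps c => PSinsert c ps) P (b :: t').reverse
          = P ++ [b :: t'] := by
        refine ih P htsort (by simp) ?_
        intro p hp
        obtain ⟨x, hx, hxa⟩ := hP p hp
        exact ⟨x, hx, fun y hy => hxa y (List.mem_cons_of_mem _ hy)⟩
      rw [show (a :: b :: t').reverse = (b :: t').reverse ++ [a] by simp,
        List.foldl_append, step1]
      simp only [List.foldl_cons, List.foldl_nil]
      rw [skip_lemma a P [b :: t'] (fun p hp => by
        obtain ⟨x, hx, hxa⟩ := hP p hp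
        exact ⟨x, hx, hxa a (by simp)⟩)]
      simp [PSinsert, if_pos hab]

lemma main_lemma_s2 : ∀ (P A : List (List ℕ)),
    (∀ p ∈ P, p ≠ []) → (∀ p ∈ P, p.Pairwise (· < ·)) →
    P.Pairwise (fun p q => ∀ a ∈ p.head?, ∀ x ∈ q, a ≤ x) →
    (∀ p ∈ A, ∃ a, p.head? = some a ∧ ∀ q ∈ P, ∀ x ∈ q, a ≤ x) →
    List.foldl (fun ps c => PSinsert c ps) A (RPW P) = A ++ P := by
  intro P
  induction P with
  | nil => intro A _ _ _ _; simp [RPW]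
  | cons r P ih =>
    intro A hne hsort hpw hA
    have hrne := hne r (List.mem_cons_self)
    have hrsort := hsort r (List.mem_cons_self)
    rw [List.pairwise_cons] at hpw
    obtain ⟨hhead, hpw'⟩ := hpw
    have hRPW : RPW (r :: P) = r.reverse ++ RPW P := by simp [RPW]
    rw [hRPW, List.foldl_append]
    rw [rebuild r A hrsort hrne (fun p hp => by
      obtain ⟨a, ha, hax⟩ := hA p hp
      exact ⟨a, ha, fun x hx => hax r (List.mem_cons_self) x hx⟩)]
    have hA' : ∀ p ∈ A ++ [r], ∃ a, p.head? = some a ∧ ∀ q ∈ P, ∀ x ∈ q, a ≤ x := by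
      intro p hp
      rcases List.mem_append.1 hp with h | h
      · obtain ⟨a, ha, hax⟩ := hA p h
        exact ⟨a, ha, fun q hq x hx => hax q (List.mem_cons_of_mem _ hq) x hx⟩
      · simp at h; subst h
        match p, hrne with
        | y :: r', _ =>
          exact ⟨y, rfl, fun q hq x hx => hhead q hq y (by simp) x hx⟩
    rw [ih (A ++ [r])
      (fun q hq => hne q (List.mem_cons_of_mem _ hq))
      (fun q hq => hsort q (List.mem_cons_of_mem _ hq)) hpw' hA',
      List.append_assoc]
    rfl

lemma inv_PSpiles (w : List ℕ) : PileInv (PSpiles w) := by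
  have : ∀ P, PileInv P → PileInv (w.foldl (fun ps c => PSinsert c ps) P) := by
    induction w with
    | nil => intro P h; exact h
    | cons c w ih => intro P h; exact ih _ (inv_insert c P h)
  exact this [] ⟨by simp, by simp, List.Pairwise.nil⟩

/-- For every permutation `σ` of `{1,…,n}`, applying Patience Sorting to the
reverse patience word of the pile configuration of `σ` returns the same pile
configuration: `R(RPW(R(σ))) = R(σ)`. -/
theorem stmt2 (n : ℕ) (σ : Equiv.Perm (Fin n)) :
    PSpiles (RPW (PSpiles (permWord σ))) = PSpiles (permWord σ) := by
  obtain ⟨h1, h2, h3⟩ := inv_PSpiles (permWord σ)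
  have := main_lemma_s2 (PSpiles (permWord σ)) [] h1 h2 h3 (by simp)
  simpa [PSpiles] using this
end

section
/- For every permutation σ of {1,…,n} and every j, the j-th pile r_j of the pile configuration R(σ) produced by Patience Sorting consists exactly of the entries of the j-th left-to-right minima subsequence s_j of σ; moreover the entries of r_j read from bottom to top occur in σ in the same order as s_j read left to right. -/
/-- The left-to-right minima subsequence of a word `w`: the entries `w(j)` with
`w(j) = min {w(i) : i ≤ j}` (here: `w(j) ≤ w(i)` for all `i < j`), in order. -/
def lrMin (w : List ℕ) : List ℕ :=
  ((List.range w.length).filter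
    (fun j => decide (∀ i, i < j → w.getD j 0 ≤ w.getD i 0))).map (fun j => w.getD j 0)

/-- The word obtained from `w` by deleting the entries of its left-to-right minima
subsequence (keeping the remaining entries in order). -/
def lrRest (w : List ℕ) : List ℕ :=
  ((List.range w.length).filter
    (fun j => !decide (∀ i, i < j → w.getD j 0 ≤ w.getD i 0))).map (fun j => w.getD j 0)

/-- `sSeq w j` is the `(j+1)`-st left-to-right minima subsequence of `w`: `sSeq w 0`
is the left-to-right minima subsequence of `w`, and `sSeq w (k+1)` is obtained by
deleting the earlier subsequences first. -/
def sSeq : List ℕ → ℕ → List ℕ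
  | w, 0 => lrMin w
  | w, Nat.succ k => sSeq (lrRest w) k

-- strict-threshold versions
def selB : ℕ → List ℕ → List ℕ
  | _, [] => []
  | m, c :: w => if c < m then c :: selB c w else selB m w

def restB : ℕ → List ℕ → List ℕ
  | _, [] => []
  | m, c :: w => if c < m then restB c w else c :: restB m w

-- ≤-threshold versions (index based)
def lrMinB (m : ℕ) (w : List ℕ) : List ℕ :=
  ((List.range w.length).filter
    (fun j => decide (w.getD j 0 ≤ m ∧ ∀ i, i < j → w.getD j 0 ≤ w.getD i 0))).map
    (fun j => w.getD j 0)

def lrRestB (m : ℕ) (w : List ℕ) : List ℕ :=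
  ((List.range w.length).filter
    (fun j => !decide (w.getD j 0 ≤ m ∧ ∀ i, i < j → w.getD j 0 ≤ w.getD i 0))).map
    (fun j => w.getD j 0)

lemma cons_pred (c : ℕ) (w : List ℕ) (j : ℕ) :
    (∀ i, i < j + 1 → (c::w).getD (j+1) 0 ≤ (c::w).getD i 0)
      ↔ (w.getD j 0 ≤ c ∧ ∀ i, i < j → w.getD j 0 ≤ w.getD i 0) := by
  constructor
  · intro h
    refine ⟨by simpa using h 0 (Nat.succ_pos j), fun i hi => by simpa using h (i+1) (Nat.succ_lt_succ hi)⟩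
  · rintro ⟨h0, h⟩ i hi
    cases i with
    | zero => simpa using h0
    | succ i => simpa using h i (Nat.lt_of_succ_lt_succ hi)

lemma lrMin_cons (c : ℕ) (w : List ℕ) : lrMin (c :: w) = c :: lrMinB c w := by
  unfold lrMin lrMinB
  rw [List.length_cons, List.range_succ_eq_map, List.filter_cons]
  simp only [Nat.not_lt_zero, decide_eq_true_eq, IsEmpty.forall_iff, forall_const, if_true,
    decide_true, Bool.false_eq_true, Bool.true_eq_false, if_false, if_true, List.filter_map, List.map_cons, List.map_map]
  refine congrArg₂ _ rfl ?_
  rw [List.filter_congr (l := List.range w.length)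
    (q := fun j => decide (w.getD j 0 ≤ c ∧ ∀ i, i < j → w.getD j 0 ≤ w.getD i 0)) ?_]
  · apply List.map_congr_left
    intro j hj
    simp
  · intro j hj
    simp only [Function.comp_apply, decide_eq_decide]
    exact cons_pred c w j

lemma lrRest_cons (c : ℕ) (w : List ℕ) : lrRest (c :: w) = lrRestB c w := by
  unfold lrRest lrRestB
  rw [List.length_cons, List.range_succ_eq_map, List.filter_cons]
  simp only [Nat.not_lt_zero, decide_eq_true_eq, IsEmpty.forall_iff, forall_const,
    decide_true, Bool.not_true, if_false, Bool.false_eq_true, Bool.true_eq_false, if_false, if_true, List.filter_map, List.map_map]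
  rw [List.filter_congr (l := List.range w.length)
    (q := fun j => !decide (w.getD j 0 ≤ c ∧ ∀ i, i < j → w.getD j 0 ≤ w.getD i 0)) ?_]
  · apply List.map_congr_left
    intro j hj
    simp
  · intro j hj
    simp only [Function.comp_apply]
    congr 1
    simp only [decide_eq_decide]
    exact cons_pred c w j

lemma consB_pred (m c : ℕ) (w : List ℕ) (j : ℕ) :
    ((c::w).getD (j+1) 0 ≤ m ∧ ∀ i, i < j + 1 → (c::w).getD (j+1) 0 ≤ (c::w).getD i 0)
      ↔ (w.getD j 0 ≤ min m c ∧ ∀ i, i < j → w.getD j 0 ≤ w.getD i 0) := by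
  rw [le_min_iff]
  constructor
  · rintro ⟨hm, h⟩
    exact ⟨⟨by simpa using hm, by simpa using h 0 (Nat.succ_pos j)⟩,
      fun i hi => by simpa using h (i+1) (Nat.succ_lt_succ hi)⟩
  · rintro ⟨⟨hm, hc⟩, h⟩
    refine ⟨by simpa using hm, fun i hi => ?_⟩
    cases i with
    | zero => simpa using hc
    | succ i => simpa using h i (Nat.lt_of_succ_lt_succ hi)

lemma lrMinB_cons (m c : ℕ) (w : List ℕ) :
    lrMinB m (c :: w) = if c ≤ m then c :: lrMinB c w else lrMinB m w := by
  by_cases h : c ≤ m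
  · rw [if_pos h]
    unfold lrMinB
    rw [List.length_cons, List.range_succ_eq_map, List.filter_cons]
    simp only [List.getD_cons_zero, Nat.not_lt_zero, IsEmpty.forall_iff, forall_const,
      and_true, h, decide_true, if_true, List.filter_map, List.map_cons, List.map_map]
    refine congrArg₂ _ rfl ?_
    rw [List.filter_congr (l := List.range w.length)
      (q := fun j => decide (w.getD j 0 ≤ c ∧ ∀ i, i < j → w.getD j 0 ≤ w.getD i 0)) ?_]
    · apply List.map_congr_left; intro j hj; simp
    · intro j hj
      simp only [Function.comp_apply, decide_eq_decide]
      rw [consB_pred, min_eq_right h]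
  · rw [if_neg h]
    unfold lrMinB
    rw [List.length_cons, List.range_succ_eq_map, List.filter_cons]
    simp only [List.getD_cons_zero, Nat.not_lt_zero, IsEmpty.forall_iff, forall_const,
      and_true, h, decide_false, Bool.false_eq_true, if_false, List.filter_map, List.map_map]
    rw [List.filter_congr (l := List.range w.length)
      (q := fun j => decide (w.getD j 0 ≤ m ∧ ∀ i, i < j → w.getD j 0 ≤ w.getD i 0)) ?_]
    · apply List.map_congr_left; intro j hj; simp
    · intro j hj
      simp only [Function.comp_apply, decide_eq_decide]
      rw [consB_pred, min_eq_left (le_of_not_ge h)]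

lemma lrRestB_cons (m c : ℕ) (w : List ℕ) :
    lrRestB m (c :: w) = if c ≤ m then lrRestB c w else c :: lrRestB m w := by
  by_cases h : c ≤ m
  · rw [if_pos h]
    unfold lrRestB
    rw [List.length_cons, List.range_succ_eq_map, List.filter_cons]
    simp only [List.getD_cons_zero, Nat.not_lt_zero, IsEmpty.forall_iff, forall_const,
      and_true, h, decide_true, Bool.not_true, Bool.false_eq_true, if_false,
      List.filter_map, List.map_map]
    rw [List.filter_congr (l := List.range w.length)
      (q := fun j => !decide (w.getD j 0 ≤ c ∧ ∀ i, i < j → w.getD j 0 ≤ w.getD i 0)) ?_]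
    · apply List.map_congr_left; intro j hj; simp
    · intro j hj
      simp only [Function.comp_apply]
      congr 1
      simp only [decide_eq_decide]
      rw [consB_pred, min_eq_right h]
  · rw [if_neg h]
    unfold lrRestB
    rw [List.length_cons, List.range_succ_eq_map, List.filter_cons]
    simp only [List.getD_cons_zero, Nat.not_lt_zero, IsEmpty.forall_iff, forall_const,
      and_true, h, decide_false, Bool.not_false, if_true, List.filter_map, List.map_cons,
      List.map_map]
    refine congrArg₂ _ rfl ?_
    rw [List.filter_congr (l := List.range w.length)
      (q := fun j => !decide (w.getD j 0 ≤ m ∧ ∀ i, i < j → w.getD j 0 ≤ w.getD i 0)) ?_]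
    · apply List.map_congr_left; intro j hj; simp
    · intro j hj
      simp only [Function.comp_apply]
      congr 1
      simp only [decide_eq_decide]
      rw [consB_pred, min_eq_left (le_of_not_ge h)]

lemma selB_eq (w : List ℕ) : ∀ m, w.Nodup → m ∉ w →
    selB m w = lrMinB m w ∧ restB m w = lrRestB m w := by
  induction w with
  | nil => intro m _ _; constructor <;> rfl
  | cons c w ih =>
    intro m hnd hm
    have hcne : c ≠ m := fun h => hm (h ▸ (List.mem_cons_self : c ∈ c :: w))
    have hcw : c ∉ w := (List.nodup_cons.mp hnd).1
    have hwnd : w.Nodup := (List.nodup_cons.mp hnd).2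
    have hmw : m ∉ w := fun h => hm (List.mem_cons_of_mem c h)
    have hiff : c < m ↔ c ≤ m := ⟨le_of_lt, fun h => lt_of_le_of_ne h hcne⟩
    rw [lrMinB_cons, lrRestB_cons]
    by_cases h : c < m
    · rw [if_pos (hiff.mp h), if_pos (hiff.mp h)]
      simp only [selB, restB, if_pos h]
      exact ⟨congrArg _ (ih c hwnd hcw).1, (ih c hwnd hcw).2⟩
    · rw [if_neg (fun h' => h (hiff.mpr h')), if_neg (fun h' => h (hiff.mpr h'))]
      simp only [selB, restB, if_neg h]
      exact ⟨(ih m hwnd hmw).1, congrArg _ (ih m hwnd hmw).2⟩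

lemma restB_sublist (w : List ℕ) : ∀ m, List.Sublist (restB m w) w := by
  induction w with
  | nil => intro m; simp [restB]
  | cons c w ih =>
    intro m
    unfold restB
    by_cases h : c < m
    · rw [if_pos h]; exact (ih c).cons c
    · rw [if_neg h]; exact (ih m).cons₂ c

lemma foldl_psinsert (w : List ℕ) : ∀ (x : ℕ) (p : List ℕ) (ps : List (List ℕ)),
    w.foldl (fun ps c => PSinsert c ps) ((x :: p) :: ps)
      = ((selB x w).reverse ++ (x :: p))
          :: (restB x w).foldl (fun ps c => PSinsert c ps) ps := by
  induction w with
  | nil => intro x p ps; simp [selB, restB]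
  | cons c w ih =>
    intro x p ps
    by_cases h : c < x
    · simp only [List.foldl_cons, PSinsert, if_pos h, selB, restB, ih]
      simp [h]
    · simp only [List.foldl_cons, PSinsert, if_neg h, selB, restB, ih]

lemma PSpiles_cons (c : ℕ) (w : List ℕ) :
    PSpiles (c :: w) = ((selB c w).reverse ++ [c]) :: PSpiles (restB c w) := by
  unfold PSpiles
  rw [List.foldl_cons]
  show (w.foldl (fun ps c => PSinsert c ps) ((c :: []) :: []))
      = _
  rw [foldl_psinsert]


lemma main (j : ℕ) : ∀ w : List ℕ, w.Nodup → j < (PSpiles w).length →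
    ((PSpiles w).getD j []).reverse = sSeq w j := by
  induction j with
  | zero =>
    intro w hnd hj
    match w with
    | [] => simp [PSpiles] at hj
    | c :: w =>
      have hcw : c ∉ w := (List.nodup_cons.mp hnd).1
      have hwnd : w.Nodup := (List.nodup_cons.mp hnd).2
      rw [PSpiles_cons]
      show (((selB c w).reverse ++ [c])).reverse = sSeq (c :: w) 0
      rw [List.reverse_append, List.reverse_reverse]
      show [c].reverse ++ selB c w = lrMin (c :: w)
      rw [lrMin_cons, (selB_eq w c hwnd hcw).1]
      rfl
  | succ j ih =>
    intro w hnd hj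
    match w with
    | [] => simp [PSpiles] at hj
    | c :: w =>
      have hcw : c ∉ w := (List.nodup_cons.mp hnd).1
      have hwnd : w.Nodup := (List.nodup_cons.mp hnd).2
      rw [PSpiles_cons] at hj ⊢
      rw [List.getD_cons_succ]
      have hrnd : (restB c w).Nodup := hwnd.sublist (restB_sublist w c)
      rw [ih (restB c w) hrnd (by simpa using hj)]
      show sSeq (restB c w) j = sSeq (lrRest (c :: w)) j
      rw [lrRest_cons, (selB_eq w c hwnd hcw).2]

/-- For every permutation `σ` of `{1,…,n}` and every `j`, the `j`-th pile of
`R(σ)` consists exactly of the entries of the `j`-th left-to-right minima subsequence of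
`σ`, and its entries read from bottom to top (i.e., the stored top-first increasing list
reversed) occur in the same order as that subsequence read left to right. -/
theorem stmt3 (n : ℕ) (σ : Equiv.Perm (Fin n)) (j : ℕ)
    (hj : j < (PSpiles (permWord σ)).length) :
    ((PSpiles (permWord σ)).getD j []).reverse = sSeq (permWord σ) j := by
  have hnd : (permWord σ).Nodup := by
    apply List.nodup_ofFn.mpr
    intro a b h
    exact σ.injective (Fin.val_injective (Nat.succ_injective h))
  exact main j _ hnd hj
end

section
/- For every permutation σ of {1,…,n} and every position t, the entry σ(t) is placed into the i-th pile r_i of R(σ) under Patience Sorting if and only if the longest increasing subsequence of σ ending at position t has length exactly i (equivalently, σ(t) occurs at the end of an increasing subsequence of σ of length i but not at the end of one of length i+1). -/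
/-- `IncSeqEndAt w t l`: `l` is a list of (0-based) positions of `w` forming an
increasing subsequence of `w` ending at position `t`: the positions are strictly
increasing, the corresponding values are strictly increasing, and the last position is `t`. -/
def IncSeqEndAt (w : List ℕ) (t : ℕ) (l : List ℕ) : Prop :=
  l.Chain' (· < ·) ∧ (l.map fun a => w.getD a 0).Chain' (· < ·) ∧
  (∀ a ∈ l, a < w.length) ∧ l.getLast? = some t

namespace PSAux

/-- The index of the pile a card `c` lands on. -/
def idx (c : ℕ) : List (List ℕ) → ℕ
  | [] => 0
  | [] :: ps => idx c ps + 1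
  | (x :: _) :: ps => if c < x then 0 else idx c ps + 1

lemma idx_le_length (c : ℕ) : ∀ ps : List (List ℕ), idx c ps ≤ ps.length
  | [] => Nat.le_refl _
  | [] :: ps => by
      simp only [idx, List.length_cons]
      exact Nat.succ_le_succ (idx_le_length c ps)
  | (x :: p) :: ps => by
      simp only [idx, List.length_cons]
      split
      · exact Nat.zero_le _
      · exact Nat.succ_le_succ (idx_le_length c ps)

lemma getD_insert_idx (c : ℕ) : ∀ ps : List (List ℕ),
    (PSinsert c ps).getD (idx c ps) [] = c :: ps.getD (idx c ps) []
  | [] => by simp [PSinsert, idx]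
  | [] :: ps => by simpa [PSinsert, idx] using getD_insert_idx c ps
  | (x :: p) :: ps => by
      by_cases h : c < x
      · simp [PSinsert, idx, h]
      · simpa [PSinsert, idx, h] using getD_insert_idx c ps

lemma getD_insert_ne (c : ℕ) : ∀ (ps : List (List ℕ)) (j : ℕ), j ≠ idx c ps →
    (PSinsert c ps).getD j [] = ps.getD j []
  | [], j, h => by
      cases j with
      | zero => exact absurd (by simp [idx]) h
      | succ m => simp [PSinsert]
  | [] :: ps, j, h => by
      cases j with
      | zero => simp [PSinsert]
      | succ m =>
        simp only [PSinsert, List.getD_cons_succ]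
        exact getD_insert_ne c ps m (fun hm => h (by simp [idx, hm]))
  | (x :: p) :: ps, j, h => by
      by_cases hx : c < x
      · cases j with
        | zero => exact absurd (by simp [idx, hx]) h
        | succ m => simp [PSinsert, hx]
      · cases j with
        | zero => simp [PSinsert, hx]
        | succ m =>
          simp only [PSinsert, if_neg hx, List.getD_cons_succ]
          exact getD_insert_ne c ps m (fun hm => h (by simp [idx, hx, hm]))

lemma ne_insert (c : ℕ) : ∀ ps : List (List ℕ), (∀ p ∈ ps, p ≠ []) →
    ∀ p ∈ PSinsert c ps, p ≠ []
  | [], _, p, hp => by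
      simp only [PSinsert, List.mem_singleton] at hp
      subst hp; simp
  | [] :: ps, hne, p, hp => absurd rfl (hne [] (by simp))
  | (x :: q) :: ps, hne, p, hp => by
      by_cases h : c < x
      · simp only [PSinsert, if_pos h, List.mem_cons] at hp
        rcases hp with rfl | hp
        · simp
        · exact hne p (List.mem_cons_of_mem _ hp)
      · simp only [PSinsert, if_neg h, List.mem_cons] at hp
        rcases hp with rfl | hp
        · simp
        · exact ne_insert c ps (fun q' hq' => hne q' (List.mem_cons_of_mem _ hq')) p hp

lemma sorted_insert (c : ℕ) : ∀ ps : List (List ℕ), (∀ p ∈ ps, p.Chain' (· < ·)) →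
    ∀ q ∈ PSinsert c ps, q.Chain' (· < ·)
  | [], _, q, hq => by
      simp only [PSinsert, List.mem_singleton] at hq
      subst hq; exact List.isChain_singleton c
  | [] :: ps, hs, q, hq => by
      simp only [PSinsert, List.mem_cons] at hq
      rcases hq with rfl | hq
      · exact List.isChain_nil
      · exact sorted_insert c ps (fun q' hq' => hs q' (List.mem_cons_of_mem _ hq')) q hq
  | (x :: p) :: ps, hs, q, hq => by
      by_cases h : c < x
      · simp only [PSinsert, if_pos h, List.mem_cons] at hq
        rcases hq with rfl | hq
        · exact List.isChain_cons_cons.mpr ⟨h, hs _ List.mem_cons_self⟩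
        · exact hs q (List.mem_cons_of_mem _ hq)
      · simp only [PSinsert, if_neg h, List.mem_cons] at hq
        rcases hq with rfl | hq
        · exact hs _ List.mem_cons_self
        · exact sorted_insert c ps (fun q' hq' => hs q' (List.mem_cons_of_mem _ hq')) q hq

lemma join_insert (c : ℕ) : ∀ ps : List (List ℕ), (PSinsert c ps).flatten.Perm (c :: ps.flatten)
  | [] => by simp [PSinsert]
  | [] :: ps => by simpa [PSinsert] using join_insert c ps
  | (x :: p) :: ps => by
      by_cases h : c < x
      · simp [PSinsert, h]
      · simp only [PSinsert, if_neg h, List.flatten_cons]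
        exact (List.Perm.append_left (x :: p) (join_insert c ps)).trans List.perm_middle

lemma headD_mem {p : List ℕ} (h : p ≠ []) : p.headD 0 ∈ p := by
  cases p with
  | nil => exact absurd rfl h
  | cons a l => simp

lemma headD_le_of_mem {p : List ℕ} (hs : p.Chain' (· < ·)) {v : ℕ} (hv : v ∈ p) :
    p.headD 0 ≤ v := by
  cases p with
  | nil => simp at hv
  | cons a l =>
    rcases List.mem_cons.mp hv with rfl | hv
    · simp
    · have hp := List.isChain_iff_pairwise.mp hs
      exact le_of_lt (by simpa using (List.pairwise_cons.mp hp).1 v hv)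

lemma headD_le_of_lt_idx (c : ℕ) : ∀ (ps : List (List ℕ)) (j : ℕ), j < idx c ps →
    (ps.getD j []).headD 0 ≤ c
  | [], j, h => by simp [idx] at h
  | [] :: ps, j, h => by
      cases j with
      | zero => simp
      | succ m =>
        simp only [idx] at h
        simpa using headD_le_of_lt_idx c ps m (Nat.lt_of_succ_lt_succ h)
  | (x :: p) :: ps, j, h => by
      by_cases hx : c < x
      · simp [idx, hx] at h
      · cases j with
        | zero => simpa using Nat.le_of_not_lt hx
        | succ m =>
          simp only [idx, if_neg hx] at h
          simpa using headD_le_of_lt_idx c ps m (Nat.lt_of_succ_lt_succ h)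

lemma lt_headD_idx (c : ℕ) : ∀ ps : List (List ℕ), (∀ p ∈ ps, p ≠ []) →
    idx c ps < ps.length → c < (ps.getD (idx c ps) []).headD 0
  | [], _, h => by simp [idx] at h
  | [] :: ps, hne, h => absurd rfl (hne [] (by simp))
  | (x :: p) :: ps, hne, h => by
      by_cases hx : c < x
      · simpa [idx, hx] using hx
      · simp only [idx, if_neg hx, List.length_cons] at h ⊢
        simpa using lt_headD_idx c ps (fun q hq => hne q (List.mem_cons_of_mem _ hq))
          (Nat.lt_of_succ_lt_succ h)

lemma head_heads_insert (c : ℕ) (ps : List (List ℕ)) :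
    ((PSinsert c ps).map (fun p => p.headD 0)).head? = some c ∨
    ((PSinsert c ps).map (fun p => p.headD 0)).head? = (ps.map (fun p => p.headD 0)).head? := by
  match ps with
  | [] => left; simp [PSinsert]
  | [] :: ps => right; simp [PSinsert]
  | (x :: p) :: ps =>
    by_cases h : c < x
    · left; simp [PSinsert, h]
    · right; simp [PSinsert, h]

lemma chain'_heads_insert (c : ℕ) : ∀ ps : List (List ℕ), (∀ p ∈ ps, p ≠ []) →
    (∀ p ∈ ps, c ∉ p) →
    (ps.map (fun p => p.headD 0)).Chain' (· < ·) →
    ((PSinsert c ps).map (fun p => p.headD 0)).Chain' (· < ·)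
  | [], _, _, _ => by simp [PSinsert, List.Chain']
  | [] :: ps, hne, _, _ => absurd rfl (hne [] (by simp))
  | (x :: p) :: ps, hne, hfresh, hch => by
      by_cases h : c < x
      · simp only [PSinsert, if_pos h, List.map_cons, List.headD_cons] at hch ⊢
        rcases List.isChain_cons.mp hch with ⟨hx1, hch'⟩
        exact List.isChain_cons.mpr ⟨fun y hy => lt_trans h (hx1 y hy), hch'⟩
      · simp only [PSinsert, if_neg h, List.map_cons, List.headD_cons] at hch ⊢
        rcases List.isChain_cons.mp hch with ⟨hx1, hch'⟩
        have hxc : x < c := by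
          have : c ≠ x := fun e => hfresh (x :: p) List.mem_cons_self
            (e ▸ List.mem_cons_self)
          omega
        refine List.isChain_cons.mpr ⟨?_, chain'_heads_insert c ps
          (fun q hq => hne q (List.mem_cons_of_mem _ hq))
          (fun q hq => hfresh q (List.mem_cons_of_mem _ hq)) hch'⟩
        intro y hy
        rcases head_heads_insert c ps with he | he
        · rw [he] at hy
          have : c = y := by simpa using hy
          omega
        · rw [he] at hy
          exact hx1 y hy

lemma mem_join_of_mem_getD {ps : List (List ℕ)} {j : ℕ} {v : ℕ} (h : v ∈ ps.getD j []) :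
    v ∈ ps.flatten := by
  by_cases hj : j < ps.length
  · rw [List.getD_eq_getElem _ _ hj] at h
    exact List.mem_flatten.mpr ⟨ps[j], List.getElem_mem hj, h⟩
  · rw [List.getD_eq_default _ _ (Nat.le_of_not_lt hj)] at h
    simp at h

lemma exists_getD_of_mem_join {ps : List (List ℕ)} {v : ℕ} (h : v ∈ ps.flatten) :
    ∃ j, v ∈ ps.getD j [] := by
  rcases List.mem_flatten.mp h with ⟨p, hp, hv⟩
  rcases List.mem_iff_getElem.mp hp with ⟨j, hj, rfl⟩
  exact ⟨j, by rwa [List.getD_eq_getElem _ _ hj]⟩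

/-- The invariant maintained during Patience Sorting on the word `w`:
`ps` is the pile configuration after `k` cards have been played. -/
structure Good (w : List ℕ) (k : ℕ) (ps : List (List ℕ)) : Prop where
  ne : ∀ p ∈ ps, p ≠ []
  heads : (ps.map (fun p => p.headD 0)).Chain' (· < ·)
  sorted : ∀ p ∈ ps, p.Chain' (· < ·)
  perm : ps.flatten.Perm (w.take k)
  memInv : ∀ j v, v ∈ ps.getD j [] →
    ∃ s, s < k ∧ w.getD s 0 = v ∧ ∃ l, IncSeqEndAt w s l ∧ l.length = j + 1
  exMem : ∀ s, s < k → ∃ j, w.getD s 0 ∈ ps.getD j []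
  mono : ∀ s' s j' j, s' < s → s < k → w.getD s' 0 < w.getD s 0 →
    w.getD s' 0 ∈ ps.getD j' [] → w.getD s 0 ∈ ps.getD j [] → j' < j

lemma good_insert {w : List ℕ} (hw : w.Nodup) {k : ℕ} {ps : List (List ℕ)}
    (G : Good w k ps) (hk : k < w.length) :
    Good w (k + 1) (PSinsert (w.getD k 0) ps) := by
  set c := w.getD k 0 with hcdef
  have hfresh : c ∉ ps.flatten := by
    intro hc
    have hmem : c ∈ w.take k := (G.perm.mem_iff).mp hc
    have hw2 : (w.take k ++ w.drop k).Nodup := by rw [List.take_append_drop]; exact hw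
    have hd : (w.take k).Disjoint (w.drop k) := (List.nodup_append'.mp hw2).2.2
    have hcd : c ∈ w.drop k := by
      rw [List.drop_eq_getElem_cons hk, hcdef, List.getD_eq_getElem _ _ hk]
      exact List.mem_cons_self
    exact hd hmem hcd
  have hfreshp : ∀ p ∈ ps, c ∉ p := fun p hp hcp =>
    hfresh (List.mem_flatten.mpr ⟨p, hp, hcp⟩)
  have getD_inj : ∀ s, s < w.length → w.getD s 0 = c → s = k := by
    intro s hs he
    rw [hcdef, List.getD_eq_getElem _ _ hs, List.getD_eq_getElem _ _ hk] at he
    exact (hw.getElem_inj_iff).mp he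
  refine ⟨ne_insert c ps G.ne, chain'_heads_insert c ps G.ne hfreshp G.heads,
    sorted_insert c ps G.sorted, ?_, ?_, ?_, ?_⟩
  · refine (join_insert c ps).trans ?_
    rw [List.take_succ, List.getElem?_eq_getElem hk]
    have : c = w[k] := by rw [hcdef, List.getD_eq_getElem _ _ hk]
    rw [← this]
    simpa using (G.perm.cons c).trans (List.perm_append_singleton c (w.take k)).symm
  · intro j v hv
    by_cases hj : j = idx c ps
    · subst hj
      rw [getD_insert_idx] at hv
      rcases List.mem_cons.mp hv with rfl | hv'
      · cases hidx : idx c ps with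
        | zero =>
          refine ⟨k, Nat.lt_succ_self k, rfl, [k], ⟨?_, ?_, ?_, ?_⟩, by simp [hidx]⟩
          · exact List.isChain_singleton k
          · exact List.isChain_singleton _
          · intro a ha
            have : a = k := by simpa using ha
            subst this; exact hk
          · simp
        | succ m =>
          have hm : m < ps.length := by
            have := idx_le_length c ps
            omega
          have hpm : ps.getD m [] ≠ [] := by
            rw [List.getD_eq_getElem _ _ hm]
            exact G.ne _ (List.getElem_mem hm)
          have hhm : (ps.getD m []).headD 0 ∈ ps.getD m [] := headD_mem hpm
          obtain ⟨s', hs', hval, l', hl', hlen⟩ := G.memInv m _ hhm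
          have hle : (ps.getD m []).headD 0 ≤ c :=
            headD_le_of_lt_idx c ps m (by omega)
          have hnec : (ps.getD m []).headD 0 ≠ c :=
            fun e => hfresh (e ▸ mem_join_of_mem_getD hhm)
          have hlt : w.getD s' 0 < c := by rw [hval]; omega
          obtain ⟨hc1, hc2, hc3, hc4⟩ := hl'
          refine ⟨k, Nat.lt_succ_self k, rfl, l' ++ [k], ⟨?_, ?_, ?_, ?_⟩, ?_⟩
          · refine List.isChain_append.mpr ⟨hc1, List.isChain_singleton k, ?_⟩
            intro x hx y hy
            rw [hc4, Option.mem_def] at hx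
            rw [List.head?_cons, Option.mem_def] at hy
            injection hx with hx; injection hy with hy
            subst hx; subst hy; exact hs'
          · rw [List.map_append]
            refine List.isChain_append.mpr ⟨hc2, List.isChain_singleton _, ?_⟩
            intro x hx y hy
            rw [List.getLast?_map, hc4, Option.map_some] at hx
            rw [List.map_cons, List.head?_cons, Option.mem_def] at hy
            rw [Option.mem_def] at hx
            injection hx with hx; injection hy with hy
            subst hx; subst hy
            rw [hcdef] at hlt
            exact hlt
          · intro a ha
            rcases List.mem_append.mp ha with ha | ha
            · exact hc3 a ha
            · have : a = k := by simpa using ha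
              subst this; exact hk
          · exact List.getLast?_concat
          · simp [hlen, hidx]
      · obtain ⟨s, hs, rest⟩ := G.memInv _ _ hv'
        exact ⟨s, Nat.lt_succ_of_lt hs, rest⟩
    · rw [getD_insert_ne c ps j hj] at hv
      obtain ⟨s, hs, rest⟩ := G.memInv _ _ hv
      exact ⟨s, Nat.lt_succ_of_lt hs, rest⟩
  · intro s hs
    rcases Nat.lt_succ_iff_lt_or_eq.mp hs with hs' | rfl
    · obtain ⟨j, hj⟩ := G.exMem s hs'
      by_cases h : j = idx c ps
      · subst h
        exact ⟨idx c ps, by rw [getD_insert_idx]; exact List.mem_cons_of_mem _ hj⟩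
      · exact ⟨j, by rw [getD_insert_ne c ps j h]; exact hj⟩
    · exact ⟨idx c ps, by rw [getD_insert_idx]; exact List.mem_cons_self⟩
  · intro s' s j' j hss hsk hval hv' hv
    have old : ∀ u ju, u ≠ c → u ∈ (PSinsert c ps).getD ju [] → u ∈ ps.getD ju [] := by
      intro u ju hu hmem
      by_cases h : ju = idx c ps
      · subst h
        rw [getD_insert_idx] at hmem
        rcases List.mem_cons.mp hmem with rfl | h2
        · exact absurd rfl hu
        · exact h2
      · rwa [getD_insert_ne c ps _ h] at hmem
    have hsk' : s ≤ k := Nat.lt_succ_iff.mp hsk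
    have hs'len : s' < w.length := by omega
    have hne' : w.getD s' 0 ≠ c := fun e => by
      have := getD_inj s' hs'len e
      omega
    rcases Nat.lt_or_ge s k with hsklt | hskge
    · have hslen : s < w.length := by omega
      have hnes : w.getD s 0 ≠ c := fun e => by
        have := getD_inj s hslen e
        omega
      exact G.mono s' s j' j hss hsklt hval (old _ _ hne' hv') (old _ _ hnes hv)
    · have hsk2 : s = k := by omega
      subst hsk2
      have hv'o : w.getD s' 0 ∈ ps.getD j' [] := old _ _ hne' hv'
      have hj : j = idx c ps := by
        by_contra h
        rw [getD_insert_ne c ps j h] at hv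
        exact hfresh (mem_join_of_mem_getD hv)
      subst hj
      by_contra hle
      push_neg at hle
      have hj'len : j' < ps.length := by
        by_contra h2
        rw [List.getD_eq_default _ _ (Nat.le_of_not_lt h2)] at hv'o
        simp at hv'o
      have hidxlen : idx c ps < ps.length := lt_of_le_of_lt hle hj'len
      have h1 : c < (ps.getD (idx c ps) []).headD 0 := lt_headD_idx c ps G.ne hidxlen
      have h2 : (ps.getD (idx c ps) []).headD 0 ≤ (ps.getD j' []).headD 0 := by
        rcases Nat.eq_or_lt_of_le hle with heq | hlt
        · rw [heq]
        · have hp := List.isChain_iff_pairwise.mp G.heads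
          have hpg := List.pairwise_iff_getElem.mp hp (idx c ps) j'
            (by simpa using hidxlen) (by simpa using hj'len) hlt
          simp only [List.getElem_map] at hpg
          rw [List.getD_eq_getElem _ _ hidxlen, List.getD_eq_getElem _ _ hj'len]
          exact le_of_lt hpg
      have h3 : (ps.getD j' []).headD 0 ≤ w.getD s' 0 := by
        refine headD_le_of_mem ?_ hv'o
        rw [List.getD_eq_getElem _ _ hj'len]
        exact G.sorted _ (List.getElem_mem hj'len)
      have h4 : w.getD s' 0 < c := hval
      omega

lemma good_piles (w : List ℕ) (hw : w.Nodup) : ∀ k, k ≤ w.length → Good w k (PSpiles (w.take k))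
  | 0, _ => by
      refine ⟨?_, ?_, ?_, ?_, ?_, ?_, ?_⟩ <;> simp [PSpiles, List.Chain']
  | k + 1, hk => by
      have hk' : k < w.length := hk
      have step : PSpiles (w.take (k + 1)) = PSinsert (w.getD k 0) (PSpiles (w.take k)) := by
        rw [List.take_succ, List.getElem?_eq_getElem hk']
        simp only [PSpiles, Option.toList_some, List.foldl_append, List.foldl_cons,
          List.foldl_nil]
        rw [List.getD_eq_getElem _ _ hk']
      rw [step]
      exact good_insert hw (good_piles w hw k (le_of_lt hk')) hk'

lemma length_le_of_incSeq (w : List ℕ) (G : Good w w.length (PSpiles w)) :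
    ∀ (l : List ℕ) (s j : ℕ), IncSeqEndAt w s l → w.getD s 0 ∈ (PSpiles w).getD j [] →
      l.length ≤ j + 1 := by
  intro l
  induction l using List.reverseRecOn with
  | nil =>
    intro s j hseq _
    exact absurd hseq.2.2.2 (by simp)
  | append_singleton l' a ih =>
    intro s j hseq hmem
    obtain ⟨hc1, hc2, hc3, hc4⟩ := hseq
    rw [List.getLast?_concat] at hc4
    have ha : a = s := by
      injection hc4
    subst ha
    rcases eq_or_ne l' [] with rfl | hl'
    · simp
    · have hlast' : l'.getLast? = some (l'.getLast hl') := List.getLast?_eq_getLast hl'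
      set s' := l'.getLast hl' with hs'def
      rcases List.isChain_append.mp hc1 with ⟨hc1', _, hcross⟩
      have hss : s' < a := by
        refine hcross s' ?_ a ?_
        · rw [hlast']; rfl
        · rfl
      rw [List.map_append] at hc2
      rcases List.isChain_append.mp hc2 with ⟨hc2', _, hvcross⟩
      have hvlt : w.getD s' 0 < w.getD a 0 := by
        refine hvcross _ ?_ _ ?_
        · rw [List.getLast?_map, hlast']; rfl
        · rfl
      have hseq' : IncSeqEndAt w s' l' :=
        ⟨hc1', hc2', fun b hb => hc3 b (List.mem_append_left _ hb), hlast'⟩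
      have hs'len : s' < w.length := hc3 s' (List.mem_append_left _ (List.getLast_mem hl'))
      have halen : a < w.length := hc3 a (by simp)
      obtain ⟨j', hj'⟩ := G.exMem s' hs'len
      have hjj : j' < j := G.mono s' a j' j hss halen hvlt hj' hmem
      have hih := ih s' j' hseq' hj'
      simp only [List.length_append, List.length_singleton]
      omega

end PSAux

open PSAux in
/-- For every permutation `σ` of `{1,…,n}` and position `t` (0-based), the
entry `σ(t)` is placed into the `(i+1)`-st pile (0-based index `i`) of `R(σ)` under
Patience Sorting if and only if the longest increasing subsequence of `σ` ending at
position `t` has length exactly `i + 1`. -/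
theorem stmt4 (n : ℕ) (σ : Equiv.Perm (Fin n)) (t i : ℕ) (ht : t < n) :
    (permWord σ).getD t 0 ∈ (PSpiles (permWord σ)).getD i [] ↔
    IsGreatest {m | ∃ l, IncSeqEndAt (permWord σ) t l ∧ l.length = m} (i + 1) := by
  have hlen : (permWord σ).length = n := by simp [permWord]
  have hw : (permWord σ).Nodup := by
    rw [permWord, List.nodup_ofFn]
    intro a b hab
    have hab' : (σ a : ℕ) + 1 = (σ b : ℕ) + 1 := hab
    have : (σ a : ℕ) = (σ b : ℕ) := by omega
    exact σ.injective (Fin.val_injective this)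
  set w := permWord σ with hwdef
  have G : Good w w.length (PSpiles w) := by
    have := good_piles w hw w.length le_rfl
    rwa [List.take_length] at this
  have ht' : t < w.length := by omega
  have fwd : ∀ i', w.getD t 0 ∈ (PSpiles w).getD i' [] →
      IsGreatest {m | ∃ l, IncSeqEndAt w t l ∧ l.length = m} (i' + 1) := by
    intro i' h
    obtain ⟨s, hs, hval, l, hl, hlen'⟩ := G.memInv i' _ h
    have hst : s = t := by
      rw [List.getD_eq_getElem _ _ hs, List.getD_eq_getElem _ _ ht'] at hval
      exact (hw.getElem_inj_iff).mp hval
    subst hst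
    constructor
    · exact ⟨l, hl, hlen'⟩
    · rintro m ⟨l2, hl2, rfl⟩
      exact length_le_of_incSeq w G l2 s i' hl2 h
  constructor
  · exact fwd i
  · intro hG
    obtain ⟨j, hj⟩ := G.exMem t ht'
    have h2 := fwd j hj
    have : i + 1 = j + 1 := hG.unique h2
    have hij : i = j := by omega
    subst hij
    exact hj
end

section
/- For every permutation σ of {1,…,n}, the number of piles in the pile configuration R(σ) produced by Patience Sorting equals the length of the longest increasing subsequence of σ. -/
/-- `IncSeq w l`: `l` is a list of (0-based) positions of `w` forming an increasing
subsequence of `w`: strictly increasing positions with strictly increasing values. -/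
def IncSeq (w : List ℕ) (l : List ℕ) : Prop :=
  l.Chain' (· < ·) ∧ (l.map fun a => w.getD a 0).Chain' (· < ·) ∧ ∀ a ∈ l, a < w.length

lemma getD_append_lt (w w2 : List ℕ) (n : ℕ) (h : n < w.length) :
    (w ++ w2).getD n 0 = w.getD n 0 := by
  simp [List.getD, List.getElem?_append, h]

lemma getD_concat_self (w : List ℕ) (c : ℕ) : (w ++ [c]).getD w.length 0 = c := by
  simp [List.getD]

lemma headD_mem {p : List ℕ} (h : p ≠ []) : p.headD 0 ∈ p := by
  cases p with
  | nil => simp at h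
  | cons x t => simp

lemma headD_le_of_mem {p : List ℕ} (hs : p.Chain' (· < ·)) {v : ℕ} (hv : v ∈ p) :
    p.headD 0 ≤ v := by
  cases p with
  | nil => simp at hv
  | cons x t =>
    rcases List.mem_cons.1 hv with rfl | h
    · simp
    · exact le_of_lt (List.rel_of_pairwise_cons (List.isChain_iff_pairwise.1 hs) h)

lemma IncSeq_append (w w2 l : List ℕ) (h : IncSeq w l) : IncSeq (w ++ w2) l := by
  obtain ⟨h1, h2, h3⟩ := h
  refine ⟨h1, ?_, fun a ha => by
    have := h3 a ha; simp [List.length_append]; omega⟩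
  have : (l.map fun a => (w ++ w2).getD a 0) = l.map fun a => w.getD a 0 :=
    List.map_congr_left fun a ha => getD_append_lt w w2 a (h3 a ha)
  rw [this]; exact h2

/-- Extend an increasing subsequence of `w` ending at position `a` (with value `va`)
by the new last position `w.length` whose value is `c > va`. -/
lemma IncSeq_extend {w l : List ℕ} {a c : ℕ} (h : IncSeq w (l ++ [a]))
    (hva : w.getD a 0 < c) : IncSeq (w ++ [c]) ((l ++ [a]) ++ [w.length]) := by
  obtain ⟨h1, h2, h3⟩ := h
  have ha : a < w.length := h3 a (by simp)
  have hmem : ∀ b ∈ l ++ [a], b < w.length := h3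
  constructor
  · simp only [List.Chain']; rw [List.isChain_append]
    refine ⟨h1, List.isChain_singleton _, ?_⟩
    intro x hx y hy
    simp at hy; subst hy
    simp at hx
    exact hmem x (by rw [hx]; simp)
  constructor
  · have key : (((l ++ [a]) ++ [w.length]).map fun b => (w ++ [c]).getD b 0)
        = ((l ++ [a]).map fun b => w.getD b 0) ++ [c] := by
      rw [List.map_append]
      congr 1
      · exact List.map_congr_left fun b hb => getD_append_lt w [c] b (hmem b hb)
      · simp [getD_concat_self]
    rw [key]; simp only [List.Chain']; rw [List.isChain_append]
    refine ⟨h2, List.isChain_singleton _, ?_⟩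
    intro x hx y hy
    simp at hy; subst hy
    rw [List.map_append] at hx
    simp at hx
    rw [← hx]
    simpa [List.getD] using hva
  · intro b hb
    rcases List.mem_append.1 hb with hb | hb
    · have := hmem b hb; simp; omega
    · simp at hb; rw [hb]; simp

structure PSInv (w : List ℕ) (ps : List (List ℕ)) : Prop where
  ne : ∀ i < ps.length, ps.getD i [] ≠ []
  sorted : ∀ i, (ps.getD i []).Chain' (· < ·)
  memw : ∀ i, ∀ v ∈ ps.getD i [], v ∈ w
  tops : ∀ i k, i < k → k < ps.length →
    (ps.getD i []).headD 0 < (ps.getD k []).headD 0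
  lower : ∀ j < ps.length, ∃ l a, IncSeq w (l ++ [a]) ∧ l.length = j ∧
    w.getD a 0 = (ps.getD j []).headD 0
  upper : ∀ l a, IncSeq w (l ++ [a]) →
    ∃ j < ps.length, w.getD a 0 ∈ ps.getD j [] ∧ l.length ≤ j

lemma PSinsert_spec (c : ℕ) (ps : List (List ℕ))
    (hne : ∀ i < ps.length, ps.getD i [] ≠ []) :
    ∃ j ≤ ps.length,
      (PSinsert c ps).length = (if j < ps.length then ps.length else ps.length + 1) ∧
      (∀ i, (PSinsert c ps).getD i [] =
        if i = j then c :: ps.getD j [] else ps.getD i []) ∧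
      (∀ i < j, (ps.getD i []).headD 0 ≤ c) ∧
      (j < ps.length → c < (ps.getD j []).headD 0) := by
  induction ps with
  | nil =>
    refine ⟨0, le_rfl, by simp [PSinsert], ?_, by omega, by intro h; simp at h⟩
    intro i
    cases i <;> simp [PSinsert]
  | cons p ps ih =>
    have hp : p ≠ [] := by simpa using hne 0 (by simp)
    obtain ⟨x, pt, rfl⟩ := List.exists_cons_of_ne_nil hp
    by_cases hcx : c < x
    · refine ⟨0, by simp, by simp [PSinsert, hcx], ?_, by omega, by simpa using hcx⟩
      intro i
      cases i <;> simp [PSinsert, hcx]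
    · obtain ⟨j, hj, hlen, hget, hle, hlt⟩ := ih (fun i h => by
        simpa using hne (i+1) (by simpa using h))
      refine ⟨j+1, by simpa using hj, ?_, ?_, ?_, ?_⟩
      · have : PSinsert c ((x :: pt) :: ps) = (x :: pt) :: PSinsert c ps := by
          simp [PSinsert, hcx]
        rw [this]
        simp only [List.length_cons, hlen]
        split <;> split <;> omega
      · intro i
        have hrw : PSinsert c ((x :: pt) :: ps) = (x :: pt) :: PSinsert c ps := by
          simp [PSinsert, hcx]
        rw [hrw]
        cases i with
        | zero => simp
        | succ k =>
          simp only [List.getD_cons_succ, hget k, Nat.succ_eq_add_one,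
            Nat.add_right_cancel_iff]
      · intro i hi
        cases i with
        | zero => simpa using le_of_not_gt hcx
        | succ k => simpa using hle k (by omega)
      · intro h
        have := hlt (by simpa using h)
        simpa using this

lemma IncSeq_prefix {w l1 l2 : List ℕ} (h : IncSeq w (l1 ++ l2)) : IncSeq w l1 := by
  obtain ⟨h1, h2, h3⟩ := h
  rw [List.map_append] at h2
  exact ⟨(List.isChain_append.1 h1).1, (List.isChain_append.1 h2).1,
    fun a ha => h3 a (List.mem_append_left _ ha)⟩

lemma IncSeq_of_append {w w2 l : List ℕ} (h : IncSeq (w ++ w2) l)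
    (hb : ∀ b ∈ l, b < w.length) : IncSeq w l := by
  obtain ⟨h1, h2, _⟩ := h
  refine ⟨h1, ?_, hb⟩
  have : (l.map fun a => (w ++ w2).getD a 0) = l.map fun a => w.getD a 0 :=
    List.map_congr_left fun a ha => getD_append_lt w w2 a (hb a ha)
  rwa [this] at h2

lemma PSInv_step {w : List ℕ} {ps : List (List ℕ)} {c : ℕ}
    (h : PSInv w ps) (hc : c ∉ w) : PSInv (w ++ [c]) (PSinsert c ps) := by
  obtain ⟨j, hj, hlen, hget, hle, hlt⟩ := PSinsert_spec c ps h.ne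
  set qs := PSinsert c ps with hqs
  have hcase : (j < ps.length ∧ qs.length = ps.length) ∨
      (j = ps.length ∧ qs.length = ps.length + 1) := by
    split at hlen
    · exact Or.inl ⟨‹_›, hlen⟩
    · exact Or.inr ⟨by omega, hlen⟩
  have hjlt : j < qs.length := by omega
  have hstrict : ∀ i < j, (ps.getD i []).headD 0 < c := by
    intro i hi
    have h1 : (ps.getD i []).headD 0 ≤ c := hle i hi
    have h2 : (ps.getD i []).headD 0 ∈ w :=
      h.memw i _ (headD_mem (h.ne i (by omega)))
    rcases lt_or_eq_of_le h1 with h' | h'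
    · exact h'
    · exact absurd (h' ▸ h2) hc
  constructor
  · -- ne
    intro i hi
    rw [hget i]
    split
    · simp
    · exact h.ne i (by omega)
  · -- sorted
    intro i
    rw [hget i]
    split
    · rcases hcase with ⟨hjl, _⟩ | ⟨hjl, _⟩
      · simp only [List.Chain']; rw [List.isChain_cons]
        refine ⟨?_, h.sorted j⟩
        intro b hb
        have hne := h.ne j hjl
        obtain ⟨x, t, hxt⟩ := List.exists_cons_of_ne_nil hne
        rw [hxt] at hb
        simp at hb
        have := hlt hjl
        rw [hxt] at this
        simp at this
        omega
      · rw [List.getD_eq_default _ _ (by omega)]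
        exact List.isChain_singleton _
    · exact h.sorted i
  · -- memw
    intro i v hv
    rw [hget i] at hv
    split at hv
    · rcases List.mem_cons.1 hv with rfl | hv'
      · simp
      · exact List.mem_append_left _ (h.memw j v hv')
    · exact List.mem_append_left _ (h.memw i v hv)
  · -- tops
    intro i k hik hk
    rw [hget i, hget k]
    by_cases hkj : k = j
    · subst hkj
      have hij : i ≠ k := by omega
      rw [if_neg hij, if_pos rfl]
      simp only [List.headD_cons]
      exact hstrict i hik
    · have hklen : k < ps.length := by omega
      rw [if_neg hkj]
      by_cases hij : i = j
      · rw [if_pos hij]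
        simp only [List.headD_cons]
        have hjlen : j < ps.length := by omega
        calc c < (ps.getD j []).headD 0 := hlt hjlen
          _ ≤ (ps.getD k []).headD 0 := by
            rcases lt_or_eq_of_le (by omega : j ≤ k) with h' | h'
            · exact le_of_lt (h.tops j k (by omega) hklen)
            · rw [h']
      · rw [if_neg hij]
        exact h.tops i k hik hklen
  · -- lower
    intro j' hj'
    rw [hget j']
    by_cases hjj : j' = j
    · subst hjj
      rw [if_pos rfl]
      simp only [List.headD_cons]
      cases j' with
      | zero =>
        refine ⟨[], w.length, ?_, rfl, getD_concat_self w c⟩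
        refine ⟨List.isChain_singleton _, List.isChain_singleton _, ?_⟩
        intro a ha
        simp at ha
        simp [ha]
      | succ j2 =>
        have hj2 : j2 < ps.length := by omega
        obtain ⟨l, a, hinc, hlen2, hval⟩ := h.lower j2 hj2
        have hva : w.getD a 0 < c := by rw [hval]; exact hstrict j2 (by omega)
        exact ⟨l ++ [a], w.length, IncSeq_extend hinc hva, by simp [hlen2],
          getD_concat_self w c⟩
    · rw [if_neg hjj]
      have hj'len : j' < ps.length := by omega
      obtain ⟨l, a, hinc, hlena, hval⟩ := h.lower j' hj'len
      have ha : a < w.length := hinc.2.2 a (by simp)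
      exact ⟨l, a, IncSeq_append w [c] _ hinc, hlena,
        by rw [getD_append_lt w [c] a ha]; exact hval⟩
  · -- upper
    intro l a hinc'
    have hbnd : ∀ b ∈ l ++ [a], b < w.length + 1 := by
      intro b hb
      have := hinc'.2.2 b hb
      simpa using this
    have hpair : (l ++ [a]).Pairwise (· < ·) := List.isChain_iff_pairwise.1 hinc'.1
    have hlta : ∀ x ∈ l, x < a := by
      intro x hx
      exact (List.pairwise_append.1 hpair).2.2 x hx a (by simp)
    have ha : a < w.length + 1 := hbnd a (by simp)
    rcases lt_or_eq_of_le (by omega : a ≤ w.length) with haw | haw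
    · -- old last position
      have hinc : IncSeq w (l ++ [a]) := by
        refine IncSeq_of_append hinc' ?_
        intro b hb
        rcases List.mem_append.1 hb with hb | hb
        · exact lt_trans (hlta b hb) haw
        · simp at hb; omega
      obtain ⟨j', hj'len, hmem, hlj⟩ := h.upper l a hinc
      refine ⟨j', by omega, ?_, hlj⟩
      rw [getD_append_lt w [c] a haw, hget j']
      split
      · rename_i hjj
        rw [hjj] at hmem
        exact List.mem_cons_of_mem _ hmem
      · exact hmem
    · -- new last position: value c
      have hvala : (w ++ [c]).getD a 0 = c := by rw [haw]; exact getD_concat_self w c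
      rcases List.eq_nil_or_concat l with rfl | ⟨l3, a3, rfl⟩
      · refine ⟨j, hjlt, ?_, by simp⟩
        rw [hvala, hget j, if_pos rfl]
        simp
      · -- l = l3 ++ [a3]
        have hl3 : l3.concat a3 = l3 ++ [a3] := List.concat_eq_append
        rw [hl3] at hinc' hpair hlta ⊢
        have hsub' : IncSeq (w ++ [c]) (l3 ++ [a3]) := IncSeq_prefix hinc'
        have hsub : IncSeq w (l3 ++ [a3]) := by
          refine IncSeq_of_append hsub' ?_
          intro b hb
          have := hlta b hb
          omega
        obtain ⟨j3, hj3, hmem3, hl3len⟩ := h.upper l3 a3 hsub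
        -- value at a3 is less than c
        have ha3w : a3 < w.length := by have := hlta a3 (by simp); omega
        have hv3c : w.getD a3 0 < c := by
          have h2 := hinc'.2.1
          rw [List.map_append] at h2; simp only [List.Chain'] at h2; rw [List.isChain_append] at h2
          have := h2.2.2 (w.getD a3 0) ?_ c ?_
          · exact this
          · rw [List.map_append, List.getLast?_append]
            simp [List.getD, List.getElem?_append, ha3w]
          · simp only [List.map_cons, List.map_nil, List.head?_cons,
              Option.mem_def, Option.some.injEq]
            exact hvala
        have htop : (ps.getD j3 []).headD 0 < c :=
          lt_of_le_of_lt (headD_le_of_mem (h.sorted j3) hmem3) hv3c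
        have hj3j : j3 < j := by
          by_contra hcon
          push_neg at hcon
          have hjlen : j < ps.length := by omega
          have : c < (ps.getD j3 []).headD 0 := by
            rcases lt_or_eq_of_le hcon with h' | h'
            · exact lt_trans (hlt hjlen) (h.tops j j3 h' hj3)
            · rw [← h']; exact hlt hjlen
          omega
        refine ⟨j, hjlt, ?_, by simp; omega⟩
        rw [hvala, hget j, if_pos rfl]
        simp

lemma PSInv_base : PSInv ([] : List ℕ) [] := by
  constructor
  · intro i hi; simp at hi
  · intro i; cases i <;> exact List.isChain_nil
  · intro i v hv; cases i <;> simp at hv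
  · intro i k _ hk; simp at hk
  · intro j hj; simp at hj
  · intro l a hinc
    have := hinc.2.2 a (by simp)
    simp at this

lemma PSInv_pspiles (w : List ℕ) (hw : w.Nodup) : PSInv w (PSpiles w) := by
  induction w using List.reverseRecOn with
  | nil => exact PSInv_base
  | append_singleton w c ih =>
    have hps : PSpiles (w ++ [c]) = PSinsert c (PSpiles w) := by
      simp [PSpiles, List.foldl_append]
    rw [hps]
    have hw' : w.Nodup := hw.of_append_left
    have hcw : c ∉ w := by
      have := List.disjoint_of_nodup_append hw
      intro hcon
      exact this hcon (by simp)
    exact PSInv_step (ih hw') hcw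


/-- For every permutation `σ` of `{1,…,n}`, the number of piles produced by
Patience Sorting equals the length of the longest increasing subsequence of `σ`. -/
theorem stmt5 (n : ℕ) (σ : Equiv.Perm (Fin n)) :
    IsGreatest {m | ∃ l, IncSeq (permWord σ) l ∧ l.length = m}
      (PSpiles (permWord σ)).length := by
  have hn : (permWord σ).Nodup := by
    rw [permWord, List.nodup_ofFn]
    intro i j hij
    simp only at hij
    exact σ.injective (Fin.val_injective (by omega))
  have h := PSInv_pspiles _ hn
  constructor
  · rcases Nat.eq_zero_or_pos (PSpiles (permWord σ)).length with hk | hk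
    · exact ⟨[], ⟨List.isChain_nil, List.isChain_nil, by simp⟩, by simp [hk]⟩
    · obtain ⟨l, a, hinc, hlen, _⟩ :=
        h.lower ((PSpiles (permWord σ)).length - 1) (by omega)
      exact ⟨l ++ [a], hinc, by simp [hlen]; omega⟩
  · rintro m ⟨l, hl, rfl⟩
    rcases List.eq_nil_or_concat l with rfl | ⟨l3, a, rfl⟩
    · simp
    · rw [List.concat_eq_append] at hl ⊢
      obtain ⟨j, hj, _, hlj⟩ := h.upper l3 a hl
      simp only [List.length_append, List.length_cons, List.length_nil]
      omega
end

section
/- Two permutations σ, τ of {1,…,n} have the same pile configuration under Patience Sorting, R(σ) = R(τ), if and only if σ and τ are related by the equivalence relation generated by allowed interchanges; that is, if and only if there is a finite sequence of permutations starting at σ and ending at τ in which each permutation is obtained from the previous one by an allowed interchange or the inverse of an allowed interchange. -/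
/-- `AllowedInterchange σ τ`: `τ` is obtained from `σ` by swapping the adjacent entries
`σ(j), σ(j+1)` of an occurrence `i < j` of the generalized pattern 2-31
(`σ(j+1) < σ(i) < σ(j)`) that is not contained in any occurrence of 3-1-42
(there is no `k` with `i < k < j` and `σ(k) < σ(j+1)`). -/
def AllowedInterchange {n : ℕ} (σ τ : Equiv.Perm (Fin n)) : Prop :=
  ∃ (i j : ℕ) (hi : i < n) (hj : j + 1 < n),
    i < j ∧
    σ ⟨j + 1, hj⟩ < σ ⟨i, hi⟩ ∧ σ ⟨i, hi⟩ < σ ⟨j, Nat.lt_of_succ_lt hj⟩ ∧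
    (¬ ∃ (k : ℕ) (hk : k < n), i < k ∧ k < j ∧ σ ⟨k, hk⟩ < σ ⟨j + 1, hj⟩) ∧
    τ = σ * Equiv.swap ⟨j, Nat.lt_of_succ_lt hj⟩ ⟨j + 1, hj⟩

/-- Invariant: no empty piles, heads strictly increasing. -/
def PInv (P : List (List ℕ)) : Prop :=
  (∀ p ∈ P, p ≠ []) ∧ (P.map (·.headI)).Pairwise (· < ·)

def PMem (x : ℕ) (P : List (List ℕ)) : Prop := ∃ p ∈ P, x ∈ p

lemma pmem_psinsert {x c : ℕ} : ∀ {P : List (List ℕ)}, PMem x (PSinsert c P) → x = c ∨ PMem x P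
  | [], h => by
    obtain ⟨p, hp, hx⟩ := h
    simp only [PSinsert, List.mem_singleton] at hp
    subst hp; simp at hx; exact Or.inl hx
  | [] :: ps, h => by
    obtain ⟨p, hp, hx⟩ := h
    simp only [PSinsert, List.mem_cons] at hp
    rcases hp with rfl | hp
    · simp at hx
    · rcases pmem_psinsert ⟨p, hp, hx⟩ with h | ⟨q, hq, hxq⟩
      · exact Or.inl h
      · exact Or.inr ⟨q, List.mem_cons_of_mem _ hq, hxq⟩
  | (y :: p) :: ps, h => by
    obtain ⟨q, hq, hx⟩ := h
    simp only [PSinsert] at hq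
    split_ifs at hq with hc
    · rcases List.mem_cons.1 hq with rfl | hq
      · rcases List.mem_cons.1 hx with rfl | hx
        · exact Or.inl rfl
        · exact Or.inr ⟨y :: p, List.mem_cons_self, hx⟩
      · exact Or.inr ⟨q, List.mem_cons_of_mem _ hq, hx⟩
    · rcases List.mem_cons.1 hq with rfl | hq
      · exact Or.inr ⟨_, List.mem_cons_self, hx⟩
      · rcases pmem_psinsert ⟨q, hq, hx⟩ with h | ⟨r, hr, hxr⟩
        · exact Or.inl h
        · exact Or.inr ⟨r, List.mem_cons_of_mem _ hr, hxr⟩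

lemma head_psinsert {h c : ℕ} : ∀ {P : List (List ℕ)},
    h ∈ (PSinsert c P).map (·.headI) → h = c ∨ h ∈ P.map (·.headI)
  | [] => by simp [PSinsert]
  | [] :: ps => by
    simp only [PSinsert, List.map_cons, List.mem_cons]
    rintro (rfl | hh)
    · exact Or.inr (Or.inl rfl)
    · rcases head_psinsert hh with h | h
      · exact Or.inl h
      · exact Or.inr (Or.inr h)
  | (y :: p) :: ps => by
    simp only [PSinsert]
    split_ifs with hc
    · simp only [List.map_cons, List.mem_cons]
      rintro (rfl | hh)
      · exact Or.inl rfl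
      · exact Or.inr (Or.inr hh)
    · simp only [List.map_cons, List.mem_cons]
      rintro (rfl | hh)
      · exact Or.inr (Or.inl rfl)
      · rcases head_psinsert hh with h | h
        · exact Or.inl h
        · exact Or.inr (Or.inr h)

lemma ne_nil_psinsert {c : ℕ} : ∀ {P : List (List ℕ)},
    (∀ p ∈ P, p ≠ []) → ∀ p ∈ PSinsert c P, p ≠ []
  | [], _ => by simp [PSinsert]
  | [] :: ps, h => by simp at h
  | (y :: p) :: ps, h => by
    simp only [PSinsert]
    split_ifs with hc
    · intro q hq
      rcases List.mem_cons.1 hq with rfl | hq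
      · simp
      · exact h q (List.mem_cons_of_mem _ hq)
    · intro q hq
      rcases List.mem_cons.1 hq with rfl | hq
      · simp
      · exact ne_nil_psinsert (fun r hr => h r (List.mem_cons_of_mem _ hr)) q hq

lemma pinv_psinsert {c : ℕ} : ∀ {P : List (List ℕ)}, PInv P → ¬ PMem c P → PInv (PSinsert c P)
  | [], _, _ => by constructor <;> simp [PSinsert]
  | [] :: ps, h, _ => absurd rfl (h.1 [] (List.mem_cons_self))
  | (y :: p) :: ps, h, hc => by
    have hcy : c ≠ y := fun hcy => hc ⟨y :: p, List.mem_cons_self, by simp [hcy]⟩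
    have hpw := h.2
    simp only [List.map_cons, List.pairwise_cons] at hpw
    simp only [PSinsert]
    split_ifs with hlt
    · refine ⟨?_, ?_⟩
      · intro q hq
        rcases List.mem_cons.1 hq with rfl | hq
        · simp
        · exact h.1 q (List.mem_cons_of_mem _ hq)
      · simp only [List.map_cons, List.pairwise_cons]
        refine ⟨fun z hz => ?_, hpw.2⟩
        simp only [List.headI]
        exact lt_trans hlt (hpw.1 z hz)
    · have hyc : y < c := lt_of_le_of_ne (not_lt.1 hlt) (Ne.symm hcy)
      have htail : PInv ps := ⟨fun q hq => h.1 q (List.mem_cons_of_mem _ hq), hpw.2⟩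
      have hcm : ¬ PMem c ps := fun ⟨q, hq, hcq⟩ => hc ⟨q, List.mem_cons_of_mem _ hq, hcq⟩
      have hIH := pinv_psinsert htail hcm
      refine ⟨?_, ?_⟩
      · intro q hq
        rcases List.mem_cons.1 hq with rfl | hq
        · simp
        · exact hIH.1 q hq
      · simp only [List.map_cons, List.pairwise_cons]
        refine ⟨fun z hz => ?_, hIH.2⟩
        rcases head_psinsert hz with rfl | hz
        · exact hyc
        · exact hpw.1 z hz

abbrev ins : List (List ℕ) → ℕ → List (List ℕ) := fun ps c => PSinsert c ps

lemma pinv_fold : ∀ (l : List ℕ) (P : List (List ℕ)), PInv P → (∀ x ∈ l, ¬ PMem x P) →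
    l.Nodup → PInv (l.foldl ins P)
  | [], P, hP, _, _ => hP
  | c :: l, P, hP, hdis, hnd => by
    simp only [List.foldl_cons]
    refine pinv_fold l (PSinsert c P) (pinv_psinsert hP (hdis c (List.mem_cons_self))) ?_
      (List.Nodup.of_cons hnd)
    intro x hx hmem
    rcases pmem_psinsert hmem with rfl | hmem
    · exact (List.nodup_cons.1 hnd).1 hx
    · exact hdis x (List.mem_cons_of_mem _ hx) hmem

lemma pinv_pspiles {w : List ℕ} (hw : w.Nodup) : PInv (PSpiles w) := by
  refine pinv_fold w [] ⟨by simp, by simp⟩ ?_ hw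
  rintro x - ⟨p, hp, -⟩; simp at hp

/-- There is a pile whose head lies strictly between `a` and `b`. -/
def HasWit (a b : ℕ) (P : List (List ℕ)) : Prop := ∃ p ∈ P, a < p.headI ∧ p.headI < b

lemma haswit_psinsert {a b c : ℕ} (hac : a < c) :
    ∀ {P : List (List ℕ)}, HasWit a b P → HasWit a b (PSinsert c P)
  | [], h => by obtain ⟨p, hp, -⟩ := h; simp at hp
  | [] :: ps, h => by
    obtain ⟨p, hp, h1, h2⟩ := h
    rcases List.mem_cons.1 hp with rfl | hp
    · simp [List.headI] at h1
    · obtain ⟨q, hq, hq1, hq2⟩ := haswit_psinsert hac ⟨p, hp, h1, h2⟩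
      exact ⟨q, List.mem_cons_of_mem _ hq, hq1, hq2⟩
  | (y :: p) :: ps, h => by
    obtain ⟨q, hq, h1, h2⟩ := h
    simp only [PSinsert]
    split_ifs with hlt
    · rcases List.mem_cons.1 hq with rfl | hq
      · simp only [List.headI] at h1 h2
        exact ⟨c :: y :: p, List.mem_cons_self, hac, lt_trans hlt h2⟩
      · exact ⟨q, List.mem_cons_of_mem _ hq, h1, h2⟩
    · rcases List.mem_cons.1 hq with rfl | hq
      · exact ⟨_, List.mem_cons_self, h1, h2⟩
      · obtain ⟨r, hr, hr1, hr2⟩ := haswit_psinsert hac ⟨q, hq, h1, h2⟩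
        exact ⟨r, List.mem_cons_of_mem _ hr, hr1, hr2⟩

lemma psinsert_head_mem (c : ℕ) : ∀ (P : List (List ℕ)), ∃ p ∈ PSinsert c P, p.headI = c
  | [] => ⟨[c], by simp [PSinsert]⟩
  | [] :: ps => by
    obtain ⟨p, hp, hh⟩ := psinsert_head_mem c ps
    exact ⟨p, List.mem_cons_of_mem _ hp, hh⟩
  | (y :: p) :: ps => by
    simp only [PSinsert]
    split_ifs with hlt
    · exact ⟨c :: y :: p, List.mem_cons_self, rfl⟩
    · obtain ⟨q, hq, hh⟩ := psinsert_head_mem c ps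
      exact ⟨q, List.mem_cons_of_mem _ hq, hh⟩

lemma haswit_fold {a b : ℕ} : ∀ (l : List ℕ) (P : List (List ℕ)), HasWit a b P →
    (∀ x ∈ l, a < x) → HasWit a b (l.foldl ins P)
  | [], P, h, _ => h
  | c :: l, P, h, hl => by
    simp only [List.foldl_cons]
    exact haswit_fold l _ (haswit_psinsert (hl c (List.mem_cons_self)) h)
      (fun x hx => hl x (List.mem_cons_of_mem _ hx))

/-- The key commutation lemma. -/
lemma psinsert_comm {a b : ℕ} (hab : a < b) :
    ∀ {P : List (List ℕ)}, PInv P → HasWit a b P →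
      PSinsert a (PSinsert b P) = PSinsert b (PSinsert a P)
  | [], _, hw => by obtain ⟨p, hp, -⟩ := hw; simp at hp
  | [] :: ps, hI, hw => absurd rfl (hI.1 [] (List.mem_cons_self))
  | (x :: p) :: ps, hI, hw => by
    obtain ⟨q, hq, h1, h2⟩ := hw
    rcases lt_trichotomy b x with hbx | rfl | hxb
    · -- impossible: witness head must be < b but all heads ≥ x > b
      exfalso
      rcases List.mem_cons.1 hq with rfl | hq
      · simp only [List.headI] at h2
        exact lt_asymm hbx h2
      · have := hI.2
        simp only [List.map_cons, List.pairwise_cons] at this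
        have hxq : x < q.headI := this.1 _ (List.mem_map_of_mem hq)
        exact absurd (lt_trans h2 hbx) (not_lt.2 (le_of_lt hxq))
    · -- b = x
      simp only [PSinsert, if_neg (lt_irrefl b), if_pos hab, if_neg (not_lt.2 hab.le)]
    · rcases lt_or_ge a x with hax | hxa
      · -- a < x < b : direct computation
        simp only [PSinsert, if_neg (not_lt.2 hxb.le), if_pos hax, if_neg (not_lt.2 hab.le)]
      · -- x ≤ a : both skip, use IH
        have hna : ¬ a < x := not_lt.2 hxa
        have hnb : ¬ b < x := not_lt.2 (le_of_lt (lt_of_le_of_lt hxa hab))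
        simp only [PSinsert, if_neg hna, if_neg hnb]
        have htail : PInv ps := by
          refine ⟨fun r hr => hI.1 r (List.mem_cons_of_mem _ hr), ?_⟩
          have := hI.2; simp only [List.map_cons, List.pairwise_cons] at this; exact this.2
        have hwps : HasWit a b ps := by
          rcases List.mem_cons.1 hq with rfl | hq
          · exact absurd h1 (not_lt.2 hxa)
          · exact ⟨q, hq, h1, h2⟩
        rw [psinsert_comm hab htail hwps]

/-- Inserting an element larger than the head of the first pile skips that pile. -/
lemma fold_skip_first : ∀ (l : List ℕ) (h : ℕ) (p : List ℕ) (Q : List (List ℕ)),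
    (∀ x ∈ l, h < x) → l.foldl ins ((h :: p) :: Q) = (h :: p) :: l.foldl ins Q
  | [], _, _, _, _ => rfl
  | c :: l, h, p, Q, hl => by
    have hc : h < c := hl c (List.mem_cons_self)
    simp only [List.foldl_cons]
    show List.foldl ins (PSinsert c ((h :: p) :: Q)) l = _
    simp only [PSinsert, if_neg (not_lt.2 (le_of_lt hc))]
    exact fold_skip_first l h p (PSinsert c Q) (fun x hx => hl x (List.mem_cons_of_mem _ hx))

/-- A decreasing run all below `h` stacks onto the single pile `h :: p`. -/
lemma fold_run_single : ∀ (B : List ℕ) (h : ℕ) (p : List ℕ),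
    (∀ x ∈ B, x < h) → B.Pairwise (· > ·) →
    B.foldl ins [h :: p] = [B.reverse ++ h :: p]
  | [], _, _, _, _ => rfl
  | c :: B, h, p, hB, hpw => by
    have hc : c < h := hB c (List.mem_cons_self)
    simp only [List.foldl_cons]
    show List.foldl ins (PSinsert c [h :: p]) B = _
    simp only [PSinsert, if_pos hc]
    rw [fold_run_single B c (h :: p) (by
      intro x hx
      exact (List.pairwise_cons.1 hpw).1 x hx) (List.Pairwise.of_cons hpw)]
    simp

lemma pspiles_run (B : List ℕ) (hne : B ≠ []) (hpw : B.Pairwise (· > ·)) :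
    PSpiles B = [B.reverse] := by
  obtain ⟨c, B', rfl⟩ := List.exists_cons_of_ne_nil hne
  show (c :: B').foldl ins [] = _
  simp only [List.foldl_cons]
  show List.foldl ins (PSinsert c []) B' = _
  simp only [PSinsert]
  rw [fold_run_single B' c [] (fun x hx => (List.pairwise_cons.1 hpw).1 x hx)
    (List.Pairwise.of_cons hpw)]
  simp

/-- Word-level occurrence of 2-31 not contained in 3-1-42. -/
def WordPat (w : List ℕ) : Prop :=
  ∃ i j, i < j ∧ j + 1 < w.length ∧ w.getD (j+1) 0 < w.getD i 0 ∧ w.getD i 0 < w.getD j 0 ∧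
    ¬ ∃ k, i < k ∧ k < j ∧ w.getD k 0 < w.getD (j+1) 0

lemma wordPat_append {v : List ℕ} (u : List ℕ) (h : WordPat v) : WordPat (u ++ v) := by
  obtain ⟨i, j, hij, hj, h1, h2, hblk⟩ := h
  have hg : ∀ m, m < v.length → (u ++ v).getD (u.length + m) 0 = v.getD m 0 := by
    intro m hm
    rw [List.getD_append_right _ _ _ _ (Nat.le_add_right _ _)]
    congr 1; omega
  refine ⟨u.length + i, u.length + j, by omega, by simp; omega, ?_, ?_, ?_⟩
  · rw [show u.length + j + 1 = u.length + (j+1) by omega, hg _ hj, hg _ (by omega)]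
    exact h1
  · rw [hg _ (by omega), hg _ (by omega)]
    exact h2
  · rintro ⟨k, hk1, hk2, hk3⟩
    have hku : u.length ≤ k := by omega
    refine hblk ⟨k - u.length, by omega, by omega, ?_⟩
    rw [show k = u.length + (k - u.length) by omega] at hk3
    rw [hg _ (by omega), show u.length + j + 1 = u.length + (j+1) by omega, hg _ hj] at hk3
    exact hk3

/-- Split off the first maximal (strictly) decreasing run. -/
def splitRun : List ℕ → List ℕ × List ℕ
  | [] => ([], [])
  | [a] => ([a], [])
  | a :: b :: w =>
      if b < a then ((a :: (splitRun (b :: w)).1), (splitRun (b :: w)).2)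
      else ([a], b :: w)

lemma splitRun_append : ∀ w : List ℕ, (splitRun w).1 ++ (splitRun w).2 = w
  | [] => rfl
  | [a] => rfl
  | a :: b :: w => by
    simp only [splitRun]
    split_ifs with h
    · simp [splitRun_append (b :: w)]
    · rfl

lemma splitRun_cons (a : ℕ) (w : List ℕ) : ∃ r, (splitRun (a :: w)).1 = a :: r := by
  cases w with
  | nil => exact ⟨[], rfl⟩
  | cons b w =>
    simp only [splitRun]
    split_ifs <;> simp

lemma splitRun_pairwise : ∀ w : List ℕ, (splitRun w).1.Pairwise (· > ·)
  | [] => by simp [splitRun]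
  | [a] => by simp [splitRun]
  | a :: b :: w => by
    simp only [splitRun]
    split_ifs with h
    · obtain ⟨r, hr⟩ := splitRun_cons b w
      have hpw := splitRun_pairwise (b :: w)
      rw [hr] at hpw ⊢
      have hbr := List.pairwise_cons.1 hpw
      refine List.pairwise_cons.2 ⟨?_, hpw⟩
      intro x hx
      rcases List.mem_cons.1 hx with rfl | hx
      · exact h
      · exact lt_trans (hbr.1 x hx) h
    · simp

lemma splitRun_boundary : ∀ w : List ℕ, w.Nodup → ∀ y t, (splitRun w).2 = y :: t →
    ∀ x, (splitRun w).1.getLast? = some x → x < y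
  | [], _, y, t, h => by simp [splitRun] at h
  | [a], _, y, t, h => by simp [splitRun] at h
  | a :: b :: w, hnd, y, t, h => by
    simp only [splitRun] at h ⊢
    split_ifs at h ⊢ with hba
    · intro x hx
      obtain ⟨r, hr⟩ := splitRun_cons b w
      rw [hr, List.getLast?_cons_cons, ← hr] at hx
      exact splitRun_boundary (b :: w) (List.Nodup.of_cons hnd) y t h x hx
    · simp only at h
      injection h with h1 h2
      intro x hx
      have hxa : x = a := by
        have : some a = some x := by simpa using hx
        exact (Option.some.injEq _ _ ▸ this).symm ▸ rfl
      have hab : a ≠ b := by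
        have := List.nodup_cons.1 hnd
        simp at this; tauto
      omega

lemma getD_eq_getLast {B : List ℕ} {c : ℕ} (hc : B.getLast? = some c) :
    B.getD (B.length - 1) 0 = c := by
  have hne : B ≠ [] := by rintro rfl; simp at hc
  rw [List.getLast?_eq_getLast_of_ne_nil hne] at hc
  have h2 := List.getLast_eq_getElem hne
  rw [List.getD_eq_getElem _ _ (by
    have := List.length_pos_iff.2 hne; omega)]
  rw [← h2]
  exact Option.some.inj hc

lemma mem_of_getLast?_eq {B : List ℕ} {c : ℕ} (hc : B.getLast? = some c) : c ∈ B := by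
  have hne : B ≠ [] := by rintro rfl; simp at hc
  rw [List.getLast?_eq_getLast_of_ne_nil hne] at hc
  exact Option.some.inj hc ▸ List.getLast_mem hne

lemma splitRun_rest_gt (w : List ℕ) (hnd : w.Nodup) (hnp : ¬ WordPat w) (c : ℕ)
    (hc : (splitRun w).1.getLast? = some c) : ∀ x ∈ (splitRun w).2, c < x := by
  set B := (splitRun w).1 with hB
  set rest := (splitRun w).2 with hrest
  have hw : B ++ rest = w := splitRun_append w
  have hBne : B ≠ [] := by rintro h; rw [h] at hc; simp at hc
  have hdisj : ∀ x ∈ B, x ∉ rest := by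
    have : (B ++ rest).Nodup := hw ▸ hnd
    rw [List.nodup_append] at this
    exact fun x hx hx' => this.2.2 x hx x hx' rfl
  by_contra hcon
  push_neg at hcon
  obtain ⟨x, hxr, hxc⟩ := hcon
  have hxc' : x < c := lt_of_le_of_ne hxc (fun h => hdisj c (mem_of_getLast?_eq hc) (h ▸ hxr))
  have hex : ∃ m, m < rest.length ∧ rest.getD m 0 < c := by
    obtain ⟨m, hm, rfl⟩ := List.mem_iff_getElem.1 hxr
    exact ⟨m, hm, by rw [List.getD_eq_getElem _ _ hm]; exact hxc'⟩
  classical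
  let j₀ := Nat.find hex
  have hj₀ := Nat.find_spec hex
  have hj₀min : ∀ m < j₀, ¬ (m < rest.length ∧ rest.getD m 0 < c) := fun m hm => Nat.find_min hex hm
  have hrne : rest ≠ [] := List.ne_nil_of_mem hxr
  obtain ⟨y, t, hyt⟩ := List.exists_cons_of_ne_nil hrne
  have hcy : c < y := splitRun_boundary w hnd y t (by rw [← hrest]; exact hyt) c hc
  have hj₀pos : 0 < j₀ := by
    rcases Nat.eq_zero_or_pos j₀ with h0 | h
    · exfalso
      have h2 := hj₀.2
      rw [show Nat.find hex = 0 from h0] at h2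
      rw [hyt] at h2
      simp [List.getD] at h2
      omega
    · exact h
  -- the element just before position j₀ in rest
  have hj₀m1 : j₀ - 1 < rest.length := by omega
  have hnb : ¬ rest.getD (j₀ - 1) 0 < c := fun h => hj₀min (j₀-1) (by omega) ⟨hj₀m1, h⟩
  have hbne : rest.getD (j₀ - 1) 0 ≠ c := by
    intro h
    refine hdisj c (mem_of_getLast?_eq hc) ?_
    rw [← h, List.getD_eq_getElem _ _ hj₀m1]
    exact List.getElem_mem _
  have hcb : c < rest.getD (j₀ - 1) 0 := by omega
  -- now build a WordPat occurrence in w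
  apply hnp
  have hlen : w.length = B.length + rest.length := by rw [← hw]; simp
  have hBlen : 1 ≤ B.length := List.length_pos_iff.2 hBne
  have hgB : w.getD (B.length - 1) 0 = c := by
    rw [← hw, List.getD_append _ _ _ _ (by omega)]
    exact getD_eq_getLast hc
  have hgR : ∀ m, w.getD (B.length + m) 0 = rest.getD m 0 := by
    intro m
    rw [← hw, List.getD_append_right _ _ _ _ (by omega)]
    congr 1; omega
  refine ⟨B.length - 1, B.length + (j₀ - 1), by omega, by omega, ?_, ?_, ?_⟩
  · rw [show B.length + (j₀ - 1) + 1 = B.length + j₀ by omega, hgR, hgB]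
    exact hj₀.2
  · rw [hgB, hgR]
    exact hcb
  · rintro ⟨k, hk1, hk2, hk3⟩
    have hkB : B.length ≤ k := by omega
    have hm : k - B.length < j₀ - 1 := by omega
    rw [show k = B.length + (k - B.length) by omega, hgR] at hk3
    rw [show B.length + (j₀ - 1) + 1 = B.length + j₀ by omega, hgR] at hk3
    refine hj₀min (k - B.length) (by omega) ⟨by omega, ?_⟩
    exact lt_trans hk3 hj₀.2

lemma reconstruct : ∀ N (w : List ℕ), w.length ≤ N → w.Nodup → ¬ WordPat w →
    w = ((PSpiles w).map List.reverse).flatten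
  | 0, w, hlen, _, _ => by
    rw [List.length_eq_zero_iff.1 (Nat.le_zero.1 hlen)]
    rfl
  | N + 1, w, hlen, hnd, hnp => by
    by_cases hwne : w = []
    · rw [hwne]; rfl
    set B := (splitRun w).1 with hB
    set rest := (splitRun w).2 with hrest
    have hw : B ++ rest = w := splitRun_append w
    have hBne : B ≠ [] := by
      obtain ⟨a, w', rfl⟩ := List.exists_cons_of_ne_nil hwne
      obtain ⟨r, hr⟩ := splitRun_cons a w'
      rw [← hB] at hr
      simp [hr]
    obtain ⟨c, hc⟩ : ∃ c, B.getLast? = some c :=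
      ⟨B.getLast hBne, List.getLast?_eq_getLast_of_ne_nil hBne⟩
    have hgt : ∀ x ∈ rest, c < x := splitRun_rest_gt w hnd hnp c hc
    have hndr : rest.Nodup := by
      have : (B ++ rest).Nodup := hw ▸ hnd
      exact (List.nodup_append.1 this).2.1
    have hnpr : ¬ WordPat rest := fun h => hnp (hw ▸ wordPat_append B h)
    have hlenr : rest.length ≤ N := by
      have h1 : B.length + rest.length = w.length := by rw [← hw]; simp
      have h2 : 1 ≤ B.length := List.length_pos_iff.2 hBne
      omega
    have hrev : ∃ r, B.reverse = c :: r := by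
      have h1 : B.reverse.head? = some c := by rw [List.head?_reverse]; exact hc
      cases hrv : B.reverse with
      | nil => rw [hrv] at h1; simp at h1
      | cons y ys =>
        rw [hrv] at h1
        simp at h1
        exact ⟨ys, by rw [h1]⟩
    obtain ⟨r, hr⟩ := hrev
    have hpiles : PSpiles w = B.reverse :: PSpiles rest := by
      rw [← hw]
      show (B ++ rest).foldl ins [] = _
      rw [List.foldl_append]
      have h1 : B.foldl ins [] = [B.reverse] := pspiles_run B hBne (splitRun_pairwise w)
      rw [h1, hr]
      exact fold_skip_first rest c r [] hgt
    have hIH := reconstruct N rest hlenr hndr hnpr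
    rw [hpiles]
    simp only [List.map_cons, List.flatten_cons, List.reverse_reverse]
    rw [← hIH, hw]

lemma permWord_length {n : ℕ} (σ : Equiv.Perm (Fin n)) : (permWord σ).length = n := by
  simp [permWord]

lemma permWord_getElem {n : ℕ} (σ : Equiv.Perm (Fin n)) (i : ℕ) (h : i < (permWord σ).length) :
    (permWord σ)[i] = (σ ⟨i, by simpa [permWord_length] using h⟩ : ℕ) + 1 := by
  simp [permWord]

lemma permWord_nodup {n : ℕ} (σ : Equiv.Perm (Fin n)) : (permWord σ).Nodup := by
  rw [permWord, List.nodup_ofFn]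
  intro x y hxy
  simp only [Nat.add_right_cancel_iff] at hxy
  exact σ.injective (Fin.val_injective hxy)

lemma permWord_injective {n : ℕ} (σ τ : Equiv.Perm (Fin n)) (h : permWord σ = permWord τ) :
    σ = τ := by
  apply Equiv.ext
  intro x
  have h1 := congrArg (fun l => l.getD x 0) h
  rw [List.getD_eq_getElem _ _ (by simp [permWord_length, x.2]),
    List.getD_eq_getElem _ _ (by simp [permWord_length, x.2])] at h1
  rw [permWord_getElem, permWord_getElem] at h1
  simp only [Nat.add_right_cancel_iff] at h1
  exact Fin.val_injective (by simpa using h1)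

lemma step_piles {n : ℕ} {σ τ : Equiv.Perm (Fin n)} (h : AllowedInterchange σ τ) :
    PSpiles (permWord σ) = PSpiles (permWord τ) := by
  obtain ⟨i, j, hi, hj, hij, h1, h2, hblk, rfl⟩ := h
  set jf : Fin n := ⟨j, Nat.lt_of_succ_lt hj⟩ with hjf
  set j1 : Fin n := ⟨j + 1, hj⟩ with hj1
  set a : ℕ := (σ j1 : ℕ) + 1 with ha
  set b : ℕ := (σ jf : ℕ) + 1 with hb
  set t : ℕ := (σ ⟨i, hi⟩ : ℕ) + 1 with ht
  set w : List ℕ := permWord σ with hwdef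
  set wτ : List ℕ := permWord (σ * Equiv.swap jf j1) with hwtdef
  have hwl : w.length = n := permWord_length σ
  have hwtl : wτ.length = n := permWord_length _
  have hpl : (permWord σ).length = n := permWord_length σ
  have hptl : (permWord (σ * Equiv.swap jf j1)).length = n := permWord_length _
  have hτval : ∀ (k : ℕ) (hk : k < n), k ≠ j → k ≠ j + 1 →
      ((σ * Equiv.swap jf j1) ⟨k, hk⟩ : ℕ) = (σ ⟨k, hk⟩ : ℕ) := by
    intro k hk hkj hkj1
    rw [Equiv.Perm.mul_apply, Equiv.swap_apply_of_ne_of_ne]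
    · exact fun hc => hkj (by simpa [hjf, Fin.ext_iff] using hc)
    · exact fun hc => hkj1 (by simpa [hj1, Fin.ext_iff] using hc)
  set u : List ℕ := w.take j with hu
  set v : List ℕ := w.drop (j + 2) with hv
  have hjn : j < n := Nat.lt_of_succ_lt hj
  have e1 : w = u ++ b :: a :: v := by
    conv_lhs => rw [← List.take_append_drop j w]
    congr 1
    rw [List.drop_eq_getElem_cons (by omega), List.drop_eq_getElem_cons (by omega)]
    rw [permWord_getElem σ j, permWord_getElem σ (j+1)]
  have e2 : wτ = u ++ a :: b :: v := by
    conv_lhs => rw [← List.take_append_drop j wτ]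
    have hta : wτ.take j = u := by
      apply List.ext_getElem
      · simp [hu, hwtl, hwl]
      · intro k hk1 hk2
        rw [List.getElem_take, List.getElem_take]
        rw [permWord_getElem, permWord_getElem]
        have hkj : k < j := by simp [hwtl] at hk1; omega
        rw [hτval k (by omega) (by omega) (by omega)]
    have htb : wτ.drop j = a :: b :: v := by
      rw [List.drop_eq_getElem_cons (by omega), List.drop_eq_getElem_cons (by omega)]
      congr 1
      · rw [permWord_getElem]
        simp only [Equiv.Perm.mul_apply]
        rw [show (⟨j, by simpa [hwtl] using (by omega : j < n)⟩ : Fin n) = jf from rfl]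
        rw [Equiv.swap_apply_left]
      congr 1
      · rw [permWord_getElem]
        simp only [Equiv.Perm.mul_apply]
        rw [show (⟨j+1, by omega⟩ : Fin n) = j1 from rfl]
        rw [Equiv.swap_apply_right]
      · apply List.ext_getElem
        · simp [hv, hwtl, hwl]
        · intro k hk1 hk2
          rw [List.getElem_drop, List.getElem_drop]
          rw [permWord_getElem, permWord_getElem]
          rw [hτval (j + 2 + k) (by simp at hk1; omega) (by omega) (by omega)]
    rw [hta, htb]
  -- the prefix pile state
  set P : List (List ℕ) := u.foldl ins [] with hP
  have hab : a < b := by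
    have := lt_trans h1 h2
    rw [Fin.lt_def] at this
    omega
  have hul : u.length = j := by simp [hu, hwl]; omega
  have hInv : PInv P := by
    have hndu : u.Nodup := (List.take_sublist _ _).nodup (permWord_nodup σ)
    refine pinv_fold u [] ⟨by simp, by simp⟩ ?_ hndu
    rintro x - ⟨p, hp, -⟩; simp at hp
  have hWit : HasWit a b P := by
    have hiu : i < u.length := by omega
    have e3 : u = u.take i ++ u[i] :: u.drop (i + 1) := by
      conv_lhs => rw [← List.take_append_drop i u]
      rw [List.drop_eq_getElem_cons hiu]
    have hut : u[i] = t := by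
      rw [List.getElem_take]
      exact permWord_getElem σ i (by omega)
    have hP2 : P = (u.drop (i+1)).foldl ins (PSinsert t ((u.take i).foldl ins [])) := by
      conv_lhs => rw [hP, e3]
      rw [List.foldl_append, hut]
      rfl
    rw [hP2]
    apply haswit_fold
    · obtain ⟨p, hp, hph⟩ := psinsert_head_mem t ((u.take i).foldl ins [])
      refine ⟨p, hp, ?_, ?_⟩ <;> rw [hph]
      · rw [Fin.lt_def] at h1; omega
      · rw [Fin.lt_def] at h2; omega
    · intro x hx
      obtain ⟨m, hm, rfl⟩ := List.mem_iff_getElem.1 hx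
      rw [List.getElem_drop]
      have hmu : i + 1 + m < u.length := by simp at hm; omega
      have hgu : u[i+1+m]'hmu = (σ ⟨i+1+m, by omega⟩ : ℕ) + 1 := by
        rw [List.getElem_take]
        exact permWord_getElem σ (i+1+m) (by omega)
      rw [hgu]
      have hns : ¬ σ ⟨i+1+m, by omega⟩ < σ j1 := by
        intro hc
        exact hblk ⟨i+1+m, by omega, by omega, by omega, hc⟩
      have hne : σ ⟨i+1+m, by omega⟩ ≠ σ j1 := by
        intro hc
        have := σ.injective hc
        simp [hj1, Fin.ext_iff] at this
        omega
      rw [Fin.lt_def] at hns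
      rw [ha]
      have : (σ j1 : ℕ) ≠ (σ ⟨i+1+m, by omega⟩ : ℕ) := fun hc => hne (Fin.val_injective hc.symm)
      omega
  have hcomm := psinsert_comm hab hInv hWit
  show w.foldl ins [] = wτ.foldl ins []
  rw [e1, e2, List.foldl_append, List.foldl_append, ← hP]
  simp only [List.foldl_cons]
  show v.foldl ins (PSinsert a (PSinsert b P)) = v.foldl ins (PSinsert b (PSinsert a P))
  rw [hcomm]

lemma getD_permWord {n : ℕ} (σ : Equiv.Perm (Fin n)) (i : ℕ) (h : i < n) :
    (permWord σ).getD i 0 = (σ ⟨i, h⟩ : ℕ) + 1 := by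
  rw [List.getD_eq_getElem _ _ (by rw [permWord_length]; exact h)]
  exact permWord_getElem σ i _

lemma wordPat_exists {n : ℕ} (σ : Equiv.Perm (Fin n)) (h : WordPat (permWord σ)) :
    ∃ τ, AllowedInterchange σ τ := by
  obtain ⟨i, j, hij, hjl, h1, h2, hblk⟩ := h
  rw [permWord_length] at hjl
  have hi : i < n := by omega
  have hjn : j < n := by omega
  rw [getD_permWord σ i hi, getD_permWord σ (j+1) hjl] at h1
  rw [getD_permWord σ i hi, getD_permWord σ j hjn] at h2
  refine ⟨_, i, j, hi, hjl, hij, ?_, ?_, ?_, rfl⟩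
  · rw [Fin.lt_def]; omega
  · rw [Fin.lt_def]; omega
  · rintro ⟨k, hk, hik, hkj, hlt⟩
    refine hblk ⟨k, hik, hkj, ?_⟩
    rw [getD_permWord σ k hk, getD_permWord σ (j+1) hjl]
    rw [Fin.lt_def] at hlt
    omega

def invCount {n : ℕ} (σ : Equiv.Perm (Fin n)) : ℕ :=
  (Finset.univ.filter fun p : Fin n × Fin n => p.1 < p.2 ∧ σ p.2 < σ p.1).card

lemma invCount_lt {n : ℕ} {σ τ : Equiv.Perm (Fin n)} (h : AllowedInterchange σ τ) :
    invCount τ < invCount σ := by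
  obtain ⟨i, j, hi, hj, hij, h1, h2, hblk, rfl⟩ := h
  set jf : Fin n := ⟨j, Nat.lt_of_succ_lt hj⟩ with hjf
  set j1 : Fin n := ⟨j + 1, hj⟩ with hj1
  set s : Equiv.Perm (Fin n) := Equiv.swap jf j1 with hs
  have hsval : ∀ x : Fin n, ((s x) : ℕ) = if x = jf then j+1 else if x = j1 then j else x := by
    intro x
    rw [hs, Equiv.swap_apply_def]
    split_ifs with e1 e2 <;> simp_all
  have hjfj1 : jf < j1 := by rw [Fin.lt_def]; simp [hjf, hj1]
  set S := Finset.univ.filter fun p : Fin n × Fin n => p.1 < p.2 ∧ σ p.2 < σ p.1 with hS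
  set T := Finset.univ.filter
    fun p : Fin n × Fin n => p.1 < p.2 ∧ (σ * s) p.2 < (σ * s) p.1 with hT
  have hmemS : (jf, j1) ∈ S := by
    rw [hS, Finset.mem_filter]
    exact ⟨Finset.mem_univ _, hjfj1, lt_trans h1 h2⟩
  have hnotT : (jf, j1) ∉ T := by
    rw [hT, Finset.mem_filter]
    rintro ⟨-, -, hlt⟩
    simp only [Equiv.Perm.mul_apply, hs, Equiv.swap_apply_left, Equiv.swap_apply_right] at hlt
    exact absurd hlt (not_lt.2 (le_of_lt (lt_trans h1 h2)))
  have hmap : ∀ p ∈ T, (s p.1, s p.2) ∈ S.erase (jf, j1) := by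
    rintro ⟨p1, p2⟩ hp
    rw [hT, Finset.mem_filter] at hp
    obtain ⟨-, hlt, hinv⟩ := hp
    simp only [Equiv.Perm.mul_apply] at hinv
    change p1 < p2 at hlt
    change σ (s p2) < σ (s p1) at hinv
    have hpne : (p1, p2) ≠ (jf, j1) := fun hc => hnotT (by
      rw [← hc]
      rw [hT, Finset.mem_filter]
      refine ⟨Finset.mem_univ _, hlt, ?_⟩
      simp only [Equiv.Perm.mul_apply]
      exact hinv)
    have hslt : s p1 < s p2 := by
      have hval : ∀ x : Fin n,
          ((s x : ℕ) = j+1 ∧ (x:ℕ) = j) ∨ ((s x : ℕ) = j ∧ (x:ℕ) = j+1) ∨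
          ((s x : ℕ) = (x:ℕ) ∧ (x:ℕ) ≠ j ∧ (x:ℕ) ≠ j+1) := by
        intro x
        by_cases c1 : x = jf
        · exact Or.inl ⟨by rw [hsval, if_pos c1], by rw [c1]⟩
        · by_cases c2 : x = j1
          · exact Or.inr (Or.inl ⟨by rw [hsval, if_neg c1, if_pos c2], by rw [c2]⟩)
          · exact Or.inr (Or.inr ⟨by rw [hsval, if_neg c1, if_neg c2],
              fun h => c1 (Fin.ext h), fun h => c2 (Fin.ext h)⟩)
      have hneval : (p1:ℕ) ≠ j ∨ (p2:ℕ) ≠ j+1 := by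
        by_contra hc
        push_neg at hc
        exact hpne (by
          have e1 : p1 = jf := Fin.ext hc.1
          have e2 : p2 = j1 := Fin.ext hc.2
          rw [e1, e2])
      rw [Fin.lt_def] at hlt ⊢
      have b1 := (s p2).2
      have b2 := p2.2
      rcases hval p1 with ⟨e1, e2⟩ | ⟨e1, e2⟩ | ⟨e1, e2, e3⟩ <;>
        rcases hval p2 with ⟨f1, f2⟩ | ⟨f1, f2⟩ | ⟨f1, f2, f3⟩ <;>
          omega
    rw [Finset.mem_erase]
    constructor
    · intro hc
      have hc1 : s p1 = jf := (Prod.mk.injEq .. ▸ hc).1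
      have hc2 : s p2 = j1 := by
        have := congrArg Prod.snd hc; simpa using this
      have hp1 : p1 = j1 := by
        have := congrArg s hc1
        rwa [hs, Equiv.swap_apply_self, Equiv.swap_apply_left] at this
      have hp2 : p2 = jf := by
        have := congrArg s hc2
        rwa [hs, Equiv.swap_apply_self, Equiv.swap_apply_right] at this
      rw [hp1, hp2] at hlt
      exact absurd hlt (not_lt.2 (le_of_lt hjfj1))
    · rw [hS, Finset.mem_filter]
      exact ⟨Finset.mem_univ _, hslt, hinv⟩
  have hinj : Set.InjOn (fun p : Fin n × Fin n => (s p.1, s p.2)) T := by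
    rintro ⟨p1, p2⟩ - ⟨q1, q2⟩ - hpq
    simp only [Prod.mk.injEq] at hpq ⊢
    exact ⟨s.injective hpq.1, s.injective hpq.2⟩
  have hcard : T.card ≤ (S.erase (jf, j1)).card :=
    Finset.card_le_card_of_injOn _ hmap hinj
  have hcard2 : (S.erase (jf, j1)).card = S.card - 1 := Finset.card_erase_of_mem hmemS
  have hpos : 0 < S.card := Finset.card_pos.2 ⟨_, hmemS⟩
  have e1 : invCount (σ * s) = T.card := rfl
  have e2 : invCount σ = S.card := rfl
  rw [hs] at e1
  rw [e1, e2]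
  omega

lemma forward_aux {n : ℕ} : ∀ (N : ℕ) (σ τ : Equiv.Perm (Fin n)),
    invCount σ + invCount τ < N →
    PSpiles (permWord σ) = PSpiles (permWord τ) →
    Relation.ReflTransGen (fun a b => AllowedInterchange a b ∨ AllowedInterchange b a) σ τ
  | 0, σ, τ, hN, _ => absurd hN (by omega)
  | N + 1, σ, τ, hN, hpiles => by
    classical
    by_cases hσ : ∃ σ', AllowedInterchange σ σ'
    · obtain ⟨σ', hs⟩ := hσ
      have hp := step_piles hs
      refine Relation.ReflTransGen.head (Or.inl hs) ?_
      exact forward_aux N σ' τ (by have := invCount_lt hs; omega) (hp ▸ hpiles)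
    · by_cases hτ : ∃ τ', AllowedInterchange τ τ'
      · obtain ⟨τ', ht⟩ := hτ
        have hp := step_piles ht
        refine Relation.ReflTransGen.tail ?_ (Or.inr ht)
        exact forward_aux N σ τ' (by have := invCount_lt ht; omega) (hpiles.trans hp)
      · -- both admit no allowed interchange: they are equal
        have h1 : ¬ WordPat (permWord σ) := fun h => hσ (wordPat_exists σ h)
        have h2 : ¬ WordPat (permWord τ) := fun h => hτ (wordPat_exists τ h)
        have r1 := reconstruct (permWord σ).length (permWord σ) le_rfl (permWord_nodup σ) h1
        have r2 := reconstruct (permWord τ).length (permWord τ) le_rfl (permWord_nodup τ) h2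
        have : permWord σ = permWord τ := by rw [r1, r2, hpiles]
        rw [permWord_injective σ τ this]


/-- Two permutations have the same pile configuration under Patience Sorting
if and only if they are related by the equivalence relation generated by allowed
interchanges, i.e., connected by a finite chain of allowed interchanges and their inverses. -/
theorem stmt6 (n : ℕ) (σ τ : Equiv.Perm (Fin n)) :
    PSpiles (permWord σ) = PSpiles (permWord τ) ↔
    Relation.ReflTransGen (fun a b => AllowedInterchange a b ∨ AllowedInterchange b a) σ τ := by
  constructor
  · intro h
    exact forward_aux (invCount σ + invCount τ + 1) σ τ (by omega) h
  · intro h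
    induction h with
    | refl => rfl
    | tail hab hbc ih =>
      rcases hbc with hbc | hbc
      · exact ih.trans (step_piles hbc)
      · exact ih.trans (step_piles hbc).symm
end

section
/- Extended Patience Sorting has the Schützenberger-type symmetry property: for every permutation σ of {1,…,n}, the insertion and recording piles of the inverse permutation are obtained by swapping those of σ, i.e., R(σ⁻¹) = S(σ) and S(σ⁻¹) = R(σ) (as ordered sequences of piles). -/
/-- The recording piles `S(w)` of Extended Patience Sorting: the `j`-th recording pile is
the set of (1-based) positions `i` whose value `w(i)` lies in the `j`-th insertion pile,
listed in increasing order from top to bottom (so, like the insertion piles, each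
recording pile is stored top-first as an increasing list). -/
def Spiles (w : List ℕ) : List (List ℕ) :=
  (PSpiles w).map fun p =>
    (List.range' 1 w.length).filter (fun i => decide (w.getD (i - 1) 0 ∈ p))

def pidx (w : List ℕ) (i : ℕ) : ℕ :=
  1 + ((Finset.range i).filter (fun j => w.getD j 0 < w.getD i 0)).attach.sup
      (fun j => pidx w j.1)
termination_by i
decreasing_by
  have := j.2; simp only [Finset.mem_filter, Finset.mem_range] at this; omega

lemma pidx_eq (w : List ℕ) (i : ℕ) :
    pidx w i = 1 + ((Finset.range i).filter (fun j => w.getD j 0 < w.getD i 0)).sup (pidx w) := by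
  rw [pidx, Finset.sup_attach]

lemma pidx_pos (w : List ℕ) (i : ℕ) : 1 ≤ pidx w i := by
  rw [pidx_eq]; omega

lemma pidx_lt {w : List ℕ} {j i : ℕ} (h : j < i) (hv : w.getD j 0 < w.getD i 0) :
    pidx w j < pidx w i := by
  rw [pidx_eq w i]
  have : pidx w j ≤ ((Finset.range i).filter (fun j => w.getD j 0 < w.getD i 0)).sup (pidx w) :=
    Finset.le_sup (by simp only [Finset.mem_filter, Finset.mem_range]; exact ⟨h, hv⟩)
  omega

lemma pidx_exists_pred {w : List ℕ} {i : ℕ} (h : 2 ≤ pidx w i) :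
    ∃ j < i, w.getD j 0 < w.getD i 0 ∧ pidx w j = pidx w i - 1 := by
  rw [pidx_eq] at h ⊢
  set s := (Finset.range i).filter (fun j => w.getD j 0 < w.getD i 0) with hs
  have hne : s.Nonempty := by
    by_contra hne
    rw [Finset.not_nonempty_iff_eq_empty] at hne
    rw [hne] at h; simp at h
  obtain ⟨j, hj, hj2⟩ := Finset.exists_mem_eq_sup s hne (pidx w)
  refine ⟨j, ?_, ?_, ?_⟩
  · have := Finset.mem_filter.mp hj; simpa using this.1
  · exact (Finset.mem_filter.mp hj).2
  · omega

lemma pidx_chain {w : List ℕ} : ∀ (i k : ℕ), 1 ≤ k → k ≤ pidx w i →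
    ∃ j, j ≤ i ∧ pidx w j = k ∧ (w.getD j 0 < w.getD i 0 ∨ j = i) := by
  intro i
  induction i using Nat.strong_induction_on with
  | _ i ih =>
    intro k hk1 hk2
    rcases eq_or_lt_of_le hk2 with heq | hlt
    · exact ⟨i, le_rfl, heq.symm, Or.inr rfl⟩
    · have h2 : 2 ≤ pidx w i := by omega
      obtain ⟨j, hji, hvj, hpj⟩ := pidx_exists_pred h2
      have hk2' : k ≤ pidx w j := by omega
      obtain ⟨j', hj'j, hpj', hv'⟩ := ih j hji k hk1 hk2'
      refine ⟨j', le_of_lt (lt_of_le_of_lt hj'j hji), hpj', Or.inl ?_⟩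
      rcases hv' with h | h
      · exact lt_trans h hvj
      · rw [h]; exact hvj


noncomputable def pileL (w : List ℕ) (m k : ℕ) : List ℕ :=
  (((List.range m).filter (fun i => pidx w i = k + 1)).reverse).map (fun i => w.getD i 0)

noncomputable def maxP (w : List ℕ) (m : ℕ) : ℕ := (Finset.range m).sup (pidx w)

lemma maxP_succ (w : List ℕ) (m : ℕ) : maxP w (m+1) = max (pidx w m) (maxP w m) := by
  rw [maxP, maxP, Finset.range_add_one, Finset.sup_insert]

lemma pidx_le_maxP (w : List ℕ) {i m : ℕ} (h : i < m) : pidx w i ≤ maxP w m :=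
  Finset.le_sup (by simpa using h)

lemma pidx_le_maxP_succ (w : List ℕ) (m : ℕ) : pidx w m ≤ maxP w m + 1 := by
  rw [pidx_eq]
  have : ((Finset.range m).filter (fun j => w.getD j 0 < w.getD m 0)).sup (pidx w) ≤ maxP w m :=
    Finset.sup_mono (Finset.filter_subset _ _)
  omega

lemma pileL_succ_self {w : List ℕ} {m k : ℕ} (h : pidx w m = k + 1) :
    pileL w (m+1) k = w.getD m 0 :: pileL w m k := by
  rw [pileL, pileL, List.range_succ, List.filter_append, List.reverse_append]
  simp [h]

lemma pileL_succ_ne {w : List ℕ} {m k : ℕ} (h : pidx w m ≠ k + 1) :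
    pileL w (m+1) k = pileL w m k := by
  rw [pileL, pileL, List.range_succ, List.filter_append, List.reverse_append]
  simp [h]

lemma mem_pileL {w : List ℕ} {m k : ℕ} {x : ℕ} :
    x ∈ pileL w m k ↔ ∃ i, i < m ∧ pidx w i = k + 1 ∧ w.getD i 0 = x := by
  simp only [pileL, List.mem_map, List.mem_reverse, List.mem_filter, List.mem_range,
    decide_eq_true_eq]
  constructor
  · rintro ⟨i, ⟨h1, h2⟩, h3⟩; exact ⟨i, h1, h2, h3⟩
  · rintro ⟨i, h1, h2, h3⟩; exact ⟨i, ⟨h1, h2⟩, h3⟩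

/-- within a pile, later entries (larger index) have smaller value -/
lemma within_pile {w : List ℕ}
    (hw : ∀ i j, i < j → j < w.length → w.getD i 0 ≠ w.getD j 0)
    {j i : ℕ} (hji : j < i) (hi : i < w.length) (hp : pidx w i = pidx w j) :
    w.getD i 0 < w.getD j 0 := by
  rcases lt_trichotomy (w.getD i 0) (w.getD j 0) with h | h | h
  · exact h
  · exact absurd h.symm (hw j i hji hi)
  · exact absurd hp (Nat.ne_of_gt (pidx_lt hji h))

lemma pileL_sorted {w : List ℕ}
    (hw : ∀ i j, i < j → j < w.length → w.getD i 0 ≠ w.getD j 0)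
    {m k : ℕ} (hm : m ≤ w.length) : (pileL w m k).Pairwise (· < ·) := by
  rw [pileL, List.pairwise_map, List.pairwise_reverse]
  have h1 : ((List.range m).filter (fun i => pidx w i = k + 1)).Pairwise (· < ·) :=
    (List.pairwise_lt_range (n := m)).filter _
  refine h1.imp_of_mem ?_
  intro a b ha hb hab
  have hamem := List.mem_filter.mp ha
  have hbmem := List.mem_filter.mp hb
  have hpa : pidx w a = k + 1 := by simpa using hamem.2
  have hpb : pidx w b = k + 1 := by simpa using hbmem.2
  have hblt : b < m := by simpa using hbmem.1
  exact within_pile hw hab (lt_of_lt_of_le hblt hm) (hpb.trans hpa.symm)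


lemma mem_range'_1 {s n x : ℕ} : x ∈ List.range' s n ↔ s ≤ x ∧ x < s + n := by
  rw [List.mem_range']
  constructor
  · rintro ⟨i, hi, rfl⟩; omega
  · intro h; exact ⟨x - s, by omega, by omega⟩

lemma PSinsert_split {c : ℕ} : ∀ (A B : List (List ℕ)),
    (∀ q ∈ A, ∃ x t, q = x :: t ∧ x ≤ c) → PSinsert c (A ++ B) = A ++ PSinsert c B := by
  intro A
  induction A with
  | nil => intro B _; rfl
  | cons q A ih =>
    intro B hq
    obtain ⟨x, t, hq1, hx⟩ := hq q (List.mem_cons_self)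
    subst hq1
    rw [List.cons_append, PSinsert, if_neg (by omega), ih B (fun q hmem => hq q (List.mem_cons_of_mem _ hmem))]
    rfl

lemma pile_has_small {w : List ℕ} {m k : ℕ} (h : k + 1 < pidx w m) :
    ∃ j < m, pidx w j = k + 1 ∧ w.getD j 0 < w.getD m 0 := by
  have h2 : 2 ≤ pidx w m := by have := pidx_pos w m; omega
  obtain ⟨j0, hj0m, hvj0, hpj0⟩ := pidx_exists_pred h2
  have hk : k + 1 ≤ pidx w j0 := by omega
  obtain ⟨j, hjj0, hpj, hv⟩ := pidx_chain j0 (k+1) (by omega) hk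
  refine ⟨j, lt_of_le_of_lt hjj0 hj0m, hpj, ?_⟩
  rcases hv with h' | h'
  · exact lt_trans h' hvj0
  · rw [h']; exact hvj0

lemma head_small {w : List ℕ}
    (hw : ∀ i j, i < j → j < w.length → w.getD i 0 ≠ w.getD j 0)
    {m k : ℕ} (hm : m ≤ w.length) (h : k + 1 < pidx w m) :
    ∃ x t, pileL w m k = x :: t ∧ x ≤ w.getD m 0 := by
  obtain ⟨j, hjm, hpj, hvj⟩ := pile_has_small h
  have hmem : w.getD j 0 ∈ pileL w m k := mem_pileL.mpr ⟨j, hjm, hpj, rfl⟩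
  rcases hL : pileL w m k with _ | ⟨a, t⟩
  · rw [hL] at hmem; simp at hmem
  · refine ⟨a, t, rfl, ?_⟩
    rw [hL] at hmem
    have hsort := pileL_sorted hw (m := m) (k := k) hm
    rw [hL, List.pairwise_cons] at hsort
    rcases List.mem_cons.mp hmem with h' | h'
    · omega
    · have := hsort.1 _ h'; omega

lemma all_big {w : List ℕ}
    (hw : ∀ i j, i < j → j < w.length → w.getD i 0 ≠ w.getD j 0)
    {m : ℕ} (hmlt : m < w.length) {x : ℕ} (hx : x ∈ pileL w m (pidx w m - 1)) :
    w.getD m 0 < x := by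
  obtain ⟨i, him, hpi, hvi⟩ := mem_pileL.mp hx
  have hpi' : pidx w i = pidx w m := by have := pidx_pos w m; omega
  subst hvi
  exact within_pile hw him hmlt hpi'.symm

lemma pile_nonempty {w : List ℕ} {m k : ℕ} (h : k + 1 ≤ maxP w m) :
    ∃ j < m, pidx w j = k + 1 := by
  have hm0 : 0 < m := by
    by_contra h'
    have : m = 0 := by omega
    subst this
    simp [maxP] at h
  have hne : (Finset.range m).Nonempty := ⟨0, by simpa using hm0⟩
  obtain ⟨i, hi, hisup⟩ := Finset.exists_mem_eq_sup (Finset.range m) hne (pidx w)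
  have him : i < m := by simpa using hi
  have : k + 1 ≤ pidx w i := by rw [maxP] at h; omega
  obtain ⟨j, hji, hpj, _⟩ := pidx_chain i (k+1) (by omega) this
  exact ⟨j, lt_of_le_of_lt hji him, hpj⟩

theorem PSpiles_take {w : List ℕ}
    (hw : ∀ i j, i < j → j < w.length → w.getD i 0 ≠ w.getD j 0) :
    ∀ m, m ≤ w.length → PSpiles (w.take m) = (List.range (maxP w m)).map (pileL w m) := by
  intro m
  induction m with
  | zero => intro _; simp [PSpiles, maxP]
  | succ m ih =>
    intro hm1
    have hm : m ≤ w.length := by omega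
    have hmlt : m < w.length := by omega
    set c := w.getD m 0 with hc
    have htake : w.take (m+1) = w.take m ++ [c] := by
      rw [List.take_succ]
      congr 1
      rw [List.getElem?_eq_getElem hmlt]
      simp [hc, List.getD_eq_getElem?_getD, List.getElem?_eq_getElem hmlt]
    have hfold : PSpiles (w.take (m+1)) = PSinsert c (PSpiles (w.take m)) := by
      rw [htake, PSpiles, List.foldl_append]; rfl
    rw [hfold, ih hm]
    set K := maxP w m with hK
    have hpK : pidx w m ≤ K + 1 := pidx_le_maxP_succ w m
    rcases eq_or_lt_of_le hpK with hnew | hold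
    · -- new pile
      have hmaxsucc : maxP w (m+1) = K + 1 := by
        rw [maxP_succ, hnew]; omega
      have hsplit : PSinsert c ((List.range K).map (pileL w m) ++ []) =
          (List.range K).map (pileL w m) ++ PSinsert c [] := by
        apply PSinsert_split
        intro q hq
        obtain ⟨k, hk, hkq⟩ := List.mem_map.mp hq
        have hkK : k < K := List.mem_range.mp hk
        obtain ⟨x, t, hxt, hx⟩ := head_small hw hm (show k + 1 < pidx w m by omega)
        exact ⟨x, t, by rw [← hkq, hxt], hx⟩
      rw [List.append_nil] at hsplit
      rw [hsplit, hmaxsucc, List.range_succ, List.map_append]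
      congr 1
      · apply List.map_congr_left
        intro k hk
        have hkK : k < K := List.mem_range.mp hk
        exact (pileL_succ_ne (by omega)).symm
      · have hnil : pileL w m K = [] := by
          rw [List.eq_nil_iff_forall_not_mem]
          intro x hx
          obtain ⟨i, him, hpi, _⟩ := mem_pileL.mp hx
          have := pidx_le_maxP w him
          omega
        have hins : PSinsert c [] = [[c]] := rfl
        rw [hins, List.map_singleton, pileL_succ_self hnew, hnil]
    · -- existing pile
      set p := pidx w m - 1 with hp
      have hpp : pidx w m = p + 1 := by have := pidx_pos w m; omega
      have hpltK : p < K := by omega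
      have hmaxsucc : maxP w (m+1) = K := by
        rw [maxP_succ]; omega
      have hrangesplit : List.range K = List.range' 0 p ++ (p :: List.range' (p+1) (K - p - 1)) := by
        rw [List.range_eq_range']
        have h1 : List.range' 0 p ++ List.range' (0 + p) (K - p) = List.range' 0 ((K - p) + p) :=
          by rw [List.range'_append_1, Nat.add_comm]
        rw [show K = (K - p) + p by omega, ← h1]
        congr 1
        rw [show K - p = (K - p - 1) + 1 by omega]
        simp [List.range'_succ]
      rw [hmaxsucc, hrangesplit, List.map_append, List.map_append]
      have hA : ∀ q ∈ (List.range' 0 p).map (pileL w m), ∃ x t, q = x :: t ∧ x ≤ c := by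
        intro q hq
        obtain ⟨k, hk, hkq⟩ := List.mem_map.mp hq
        have hkp : k < p := by
          have := mem_range'_1.mp hk; omega
        obtain ⟨x, t, hxt, hx⟩ := head_small hw hm (show k + 1 < pidx w m by omega)
        exact ⟨x, t, by rw [← hkq, hxt], hx⟩
      rw [PSinsert_split _ _ hA]
      congr 1
      · apply List.map_congr_left
        intro k hk
        have hkp : k < p := by have := mem_range'_1.mp hk; omega
        exact (pileL_succ_ne (by omega)).symm
      · -- B part
        obtain ⟨j, hjm, hpj⟩ := pile_nonempty (show p + 1 ≤ K by omega)
        have hmemj : w.getD j 0 ∈ pileL w m p := mem_pileL.mpr ⟨j, hjm, hpj, rfl⟩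
        rcases hL : pileL w m p with _ | ⟨x, t⟩
        · rw [hL] at hmemj; simp at hmemj
        · have hcx : c < x := by
            have : x ∈ pileL w m (pidx w m - 1) := by rw [← hp, hL]; exact List.mem_cons_self
            exact all_big hw hmlt this
          simp only [List.map_cons, hL, PSinsert, if_pos hcx]
          congr 1
          · rw [pileL_succ_self hpp, hL]
          · apply List.map_congr_left
            intro k hk
            have hkp : p + 1 ≤ k := by have := mem_range'_1.mp hk; omega
            exact (pileL_succ_ne (by omega)).symm


lemma permWord_getD {n : ℕ} (σ : Equiv.Perm (Fin n)) {i : ℕ} (h : i < n) :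
    (permWord σ).getD i 0 = (σ ⟨i, h⟩ : ℕ) + 1 := by
  rw [List.getD_eq_getElem _ _ (by rw [permWord_length]; exact h)]
  simp [permWord]

lemma permWord_distinct {n : ℕ} (σ : Equiv.Perm (Fin n)) :
    ∀ i j, i < j → j < (permWord σ).length → (permWord σ).getD i 0 ≠ (permWord σ).getD j 0 := by
  intro i j hij hj
  rw [permWord_length] at hj
  have hi : i < n := lt_trans hij hj
  rw [permWord_getD σ hi, permWord_getD σ hj]
  intro h
  have h2 : σ ⟨i, hi⟩ = σ ⟨j, hj⟩ := Fin.ext (by omega)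
  have := σ.injective h2
  simp only [Fin.mk.injEq] at this
  omega

lemma pidx_symm_le {n : ℕ} (σ : Equiv.Perm (Fin n)) :
    ∀ i : Fin n, pidx (permWord σ⁻¹) ((σ i : ℕ)) ≤ pidx (permWord σ) (i : ℕ) := by
  have : ∀ N : ℕ, ∀ i : Fin n, (i : ℕ) < N →
      pidx (permWord σ⁻¹) ((σ i : ℕ)) ≤ pidx (permWord σ) (i : ℕ) := by
    intro N
    induction N with
    | zero => intro i hi; omega
    | succ N ihN =>
      intro i hi
      set u := permWord σ⁻¹ with hu
      set w := permWord σ with hw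
      rw [pidx_eq u (σ i : ℕ)]
      have hsup : ((Finset.range (σ i : ℕ)).filter
          (fun j => u.getD j 0 < u.getD (σ i : ℕ) 0)).sup (pidx u)
          ≤ pidx w (i : ℕ) - 1 := by
        apply Finset.sup_le
        intro v hv
        rw [Finset.mem_filter, Finset.mem_range] at hv
        obtain ⟨hv1, hv2⟩ := hv
        have hvn : v < n := lt_trans hv1 (σ i).isLt
        set vf : Fin n := ⟨v, hvn⟩ with hvf
        have hug : u.getD v 0 = ((σ⁻¹ vf : ℕ)) + 1 := by
          rw [hu, permWord_getD σ⁻¹ hvn]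
        have hug2 : u.getD (σ i : ℕ) 0 = (i : ℕ) + 1 := by
          rw [hu, permWord_getD σ⁻¹ (σ i).isLt]
          congr 1
          have : σ⁻¹ (σ i) = i := σ.symm_apply_apply i
          rw [show (⟨(σ i : ℕ), (σ i).isLt⟩ : Fin n) = σ i from rfl, this]
        rw [hug, hug2] at hv2
        have hii : ((σ⁻¹ vf : ℕ)) < (i : ℕ) := by omega
        have hIH : pidx u ((σ (σ⁻¹ vf) : ℕ)) ≤ pidx w ((σ⁻¹ vf : ℕ)) :=
          ihN (σ⁻¹ vf) (by omega)
        rw [show σ (σ⁻¹ vf) = vf from σ.apply_symm_apply vf] at hIH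
        have hvfv : ((vf : ℕ)) = v := rfl
        rw [hvfv] at hIH
        have hwlt : pidx w ((σ⁻¹ vf : ℕ)) < pidx w (i : ℕ) := by
          apply pidx_lt hii
          rw [hw, permWord_getD σ (σ⁻¹ vf).isLt, permWord_getD σ i.isLt]
          have h1 : σ ⟨((σ⁻¹ vf : ℕ)), (σ⁻¹ vf).isLt⟩ = vf := by
            rw [show (⟨((σ⁻¹ vf : ℕ)), (σ⁻¹ vf).isLt⟩ : Fin n) = σ⁻¹ vf from rfl]
            exact σ.apply_symm_apply vf
          have h2 : σ ⟨(i : ℕ), i.isLt⟩ = σ i := by congr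
          rw [h1, h2]
          simp only [hvf]
          omega
        omega
      have := pidx_pos w (i : ℕ)
      omega
  intro i
  exact this n i i.isLt

lemma pidx_symm {n : ℕ} (σ : Equiv.Perm (Fin n)) (i : Fin n) :
    pidx (permWord σ⁻¹) ((σ i : ℕ)) = pidx (permWord σ) (i : ℕ) := by
  apply le_antisymm (pidx_symm_le σ i)
  have h := pidx_symm_le σ⁻¹ (σ i)
  rw [inv_inv] at h
  rw [show σ⁻¹ (σ i) = i from σ.symm_apply_apply i] at h
  exact h

lemma maxP_symm {n : ℕ} (σ : Equiv.Perm (Fin n)) :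
    maxP (permWord σ⁻¹) n = maxP (permWord σ) n := by
  apply le_antisymm
  · apply Finset.sup_le
    intro v hv
    have hvn : v < n := Finset.mem_range.mp hv
    have := pidx_symm σ (σ⁻¹ ⟨v, hvn⟩)
    rw [show σ (σ⁻¹ ⟨v, hvn⟩) = ⟨v, hvn⟩ from σ.apply_symm_apply _] at this
    rw [show ((⟨v, hvn⟩ : Fin n) : ℕ) = v from rfl] at this
    rw [this]
    exact Finset.le_sup (Finset.mem_range.mpr (σ⁻¹ ⟨v, hvn⟩).isLt)
  · apply Finset.sup_le
    intro i hi
    have hin : i < n := Finset.mem_range.mp hi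
    have := pidx_symm σ ⟨i, hin⟩
    rw [show ((⟨i, hin⟩ : Fin n) : ℕ) = i from rfl] at this
    rw [← this]
    exact Finset.le_sup (Finset.mem_range.mpr (σ ⟨i, hin⟩).isLt)

lemma PSpiles_perm {n : ℕ} (σ : Equiv.Perm (Fin n)) :
    PSpiles (permWord σ) = (List.range (maxP (permWord σ) n)).map (pileL (permWord σ) n) := by
  have h := PSpiles_take (permWord_distinct σ) (permWord σ).length le_rfl
  rw [List.take_length] at h
  rw [permWord_length] at h
  exact h

/-- the j-th S-pile of w -/
lemma Spile_eq {n : ℕ} (σ : Equiv.Perm (Fin n)) (k : ℕ) :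
    ((List.range' 1 (permWord σ).length).filter
      (fun i => decide ((permWord σ).getD (i - 1) 0 ∈ pileL (permWord σ) n k))) =
    ((List.range n).filter (fun i => pidx (permWord σ) i = k + 1)).map (· + 1) := by
  set w := permWord σ with hw
  rw [permWord_length]
  rw [List.range'_eq_map_range, List.filter_map]
  have hfil : List.filter ((fun i => decide (w.getD (i - 1) 0 ∈ pileL w n k)) ∘ (fun x => 1 + x))
      (List.range n) = List.filter (fun i => pidx w i = k + 1) (List.range n) := by
    apply List.filter_congr
    intro i hi
    have hin : i < n := List.mem_range.mp hi
    simp only [Function.comp_apply, Nat.add_sub_cancel_left, decide_eq_decide,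
      Nat.add_sub_cancel]
    constructor
    · intro hmem
      obtain ⟨i', hi'n, hpi', hvi'⟩ := mem_pileL.mp hmem
      have : i' = i := by
        by_contra hne
        rcases lt_or_gt_of_ne hne with h' | h'
        · exact permWord_distinct σ i' i h' (by rw [permWord_length]; exact hin) hvi'
        · exact permWord_distinct σ i i' h' (by rw [permWord_length]; exact hi'n) hvi'.symm
      rw [← this]; exact hpi'
    · intro hp
      exact mem_pileL.mpr ⟨i, hin, hp, rfl⟩
  rw [hfil]
  apply List.map_congr_left
  intro i _
  omega

lemma pile_symm {n : ℕ} (σ : Equiv.Perm (Fin n)) (k : ℕ) :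
    pileL (permWord σ⁻¹) n k =
    ((List.range n).filter (fun i => pidx (permWord σ) i = k + 1)).map (· + 1) := by
  set u := permWord σ⁻¹ with hu
  set w := permWord σ with hw
  have hlenu : u.length = n := permWord_length σ⁻¹
  haveI : IsAntisymm ℕ (· < ·) := ⟨fun a b h1 h2 => absurd h1 (by omega)⟩
  refine (fun hp h1 h2 => List.Perm.eq_of_pairwise' (r := (· < ·)) h1 h2 hp) ?_ ?_ ?_
  · -- permutation
    apply List.perm_of_nodup_nodup_toFinset_eq
    · exact ((pileL_sorted (permWord_distinct σ⁻¹) (by rw [hlenu])).imp (fun h => Nat.ne_of_lt h))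
    · apply List.Nodup.map (fun a b hab => by omega)
      exact (List.nodup_range (n := n)).filter _
    · ext x
      simp only [List.mem_toFinset, List.mem_map, List.mem_filter, List.mem_range,
        decide_eq_true_eq]
      rw [mem_pileL]
      constructor
      · rintro ⟨v, hvn, hpv, hvx⟩
        set vf : Fin n := ⟨v, hvn⟩ with hvf
        refine ⟨(σ⁻¹ vf : ℕ), ⟨(σ⁻¹ vf).isLt, ?_⟩, ?_⟩
        · have := pidx_symm σ (σ⁻¹ vf)
          rw [show σ (σ⁻¹ vf) = vf from σ.apply_symm_apply vf] at this
          rw [← this]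
          exact hpv
        · rw [hu, permWord_getD σ⁻¹ hvn] at hvx
          rw [← hvx]
      · rintro ⟨i, ⟨hin, hpi⟩, hix⟩
        refine ⟨(σ ⟨i, hin⟩ : ℕ), (σ ⟨i, hin⟩).isLt, ?_, ?_⟩
        · have := pidx_symm σ ⟨i, hin⟩
          rw [show ((⟨i, hin⟩ : Fin n) : ℕ) = i from rfl] at this
          rw [this]
          exact hpi
        · rw [hu, permWord_getD σ⁻¹ (σ ⟨i, hin⟩).isLt]
          have : σ⁻¹ (σ ⟨i, hin⟩) = ⟨i, hin⟩ := σ.symm_apply_apply _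
          rw [show (⟨((σ ⟨i, hin⟩ : Fin n) : ℕ), (σ ⟨i, hin⟩).isLt⟩ : Fin n) = σ ⟨i, hin⟩ from rfl,
            this]
          exact hix
  · exact pileL_sorted (permWord_distinct σ⁻¹) (by rw [hlenu])
  · -- RHS sorted
    apply List.Pairwise.map _ (fun a b (hab : a < b) => by omega)
    exact (List.pairwise_lt_range (n := n)).filter _

lemma key {n : ℕ} (σ : Equiv.Perm (Fin n)) :
    PSpiles (permWord σ⁻¹) = Spiles (permWord σ) := by
  rw [Spiles, PSpiles_perm σ, PSpiles_perm σ⁻¹, List.map_map, maxP_symm σ]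
  apply List.map_congr_left
  intro k _
  rw [pile_symm σ k, Function.comp_apply, Spile_eq σ k]


/-- Schützenberger-type symmetry of Extended Patience Sorting: for every
permutation `σ` of `{1,…,n}`, `R(σ⁻¹) = S(σ)` and `S(σ⁻¹) = R(σ)`, as ordered
sequences of piles. -/
theorem stmt9 (n : ℕ) (σ : Equiv.Perm (Fin n)) :
    PSpiles (permWord σ⁻¹) = Spiles (permWord σ) ∧
    Spiles (permWord σ⁻¹) = PSpiles (permWord σ) := by
  constructor
  · exact key σ
  · have h := key σ⁻¹
    rw [inv_inv] at h
    exact h.symm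
end
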